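/- arXiv:1803.09488 — 5 statements merged into one kernel-verified Lean document; each statement's English description precedes it below -/
import Mathlib

section
/- Under the pseudo-regression setup, assume additionally that |v(z)| ≤ A for μ-almost every z, that the conditional variance satisfies E[(V⁽¹⁾ − v(U⁽¹⁾))² | U⁽¹⁾] ≤ σ² almost surely, and that the Gram matrix G satisfies λmin‖x‖² ≤ xᵀGx ≤ λmax‖x‖² for all x ∈ ℝᴷ with 0 < λmin ≤ λmax. Then the expected L²(μ)-error of the pseudo-regression estimator satisfies E[∫_{ℝⁿ} |ṽ(z) − v(z)|² μ(dz)] ≤ (λmax/λmin)(σ² + A²)·K/M + inf over w ∈ span{ψ₁,…,ψ_K} of ∫_{ℝⁿ} |w(z) − v(z)|² μ(dz). -/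
open MeasureTheory ProbabilityTheory Matrix


open MeasureTheory ProbabilityTheory Matrix

/-- L² × L² → L¹ product integrability. -/
lemma aux_int_mul {α : Type*} [MeasurableSpace α] {μ : Measure α} {f g : α → ℝ}
    (hf : MemLp f 2 μ) (hg : MemLp g 2 μ) :
    Integrable (fun x => f x * g x) μ := by
  refine Integrable.mono' ((hf.integrable_sq.add hg.integrable_sq).const_mul (2⁻¹ : ℝ))
    (hf.aestronglyMeasurable.mul hg.aestronglyMeasurable) (ae_of_all _ fun x => ?_)
  have h1 := sq_nonneg (f x - g x)
  have h2 := sq_nonneg (f x + g x)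
  rw [Real.norm_eq_abs, abs_mul]
  simp only [Pi.add_apply]
  rcases abs_cases (f x) with ⟨hf1, _⟩ | ⟨hf1, _⟩ <;>
    rcases abs_cases (g x) with ⟨hg1, _⟩ | ⟨hg1, _⟩ <;> rw [hf1, hg1] <;> nlinarith

/-- quadratic form bound for the inverse matrix. -/
lemma aux_quad_inv {K : ℕ} (G : Matrix (Fin K) (Fin K) ℝ) (hGinv : IsUnit G.det)
    {lmin : ℝ} (hlmin : 0 < lmin)
    (hlow : ∀ x : Fin K → ℝ, lmin * ∑ k, (x k)^2 ≤ x ⬝ᵥ G.mulVec x)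
    (δ : Fin K → ℝ) :
    δ ⬝ᵥ G⁻¹.mulVec δ ≤ lmin⁻¹ * ∑ k, (δ k)^2 := by
  set x := G⁻¹.mulVec δ with hx
  have hGx : G.mulVec x = δ := by
    rw [hx, Matrix.mulVec_mulVec, Matrix.mul_nonsing_inv G hGinv, Matrix.one_mulVec]
  have hq : δ ⬝ᵥ x = x ⬝ᵥ G.mulVec x := by rw [hGx, dotProduct_comm]
  rw [hq]
  set q := x ⬝ᵥ G.mulVec x with hqdef
  have h1 : lmin * ∑ k, (x k)^2 ≤ q := hlow x
  have hb : (0:ℝ) ≤ ∑ k, (δ k)^2 := Finset.sum_nonneg fun k _ => sq_nonneg _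
  rcases le_or_gt q 0 with hq0 | hq0
  · exact hq0.trans (by positivity)
  · have h2 : q ^ 2 ≤ (∑ k, (x k)^2) * ∑ k, (δ k)^2 := by
      have : q = ∑ k, x k * δ k := by rw [hqdef, hGx]; rfl
      rw [this]
      exact Finset.sum_mul_sq_le_sq_mul_sq _ _ _
    have key : lmin * q ≤ ∑ k, (δ k)^2 := by nlinarith
    calc q = lmin⁻¹ * (lmin * q) := by field_simp
    _ ≤ lmin⁻¹ * ∑ k, (δ k)^2 := by
        exact mul_le_mul_of_nonneg_left key (by positivity)

/-- mean–square error of an i.i.d. empirical mean. -/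
lemma aux_mean_sq {Ω : Type*} [MeasurableSpace Ω] {P : Measure Ω} [IsProbabilityMeasure P]
    {M : ℕ} (hM : 0 < M) (X : Fin M → Ω → ℝ)
    (hL2 : ∀ m, MemLp (X m) 2 P)
    (hind : Pairwise fun i j => IndepFun (X i) (X j) P)
    (hid : ∀ m, IdentDistrib (X m) (X ⟨0, hM⟩) P P) :
    ∫ ω, ((M:ℝ)⁻¹ * ∑ m, X m ω - ∫ ω', X ⟨0,hM⟩ ω' ∂P)^2 ∂P
      ≤ (∫ ω, (X ⟨0,hM⟩ ω)^2 ∂P) / M := by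
  set S : Ω → ℝ := ∑ m, X m with hS
  have hSL2 : MemLp S 2 P := memLp_finset_sum' _ fun m _ => hL2 m
  have hES : ∫ ω, S ω ∂P = M * ∫ ω, X ⟨0,hM⟩ ω ∂P := by
    have : ∫ ω, S ω ∂P = ∑ m, ∫ ω, X m ω ∂P := by
      rw [hS]
      simp only [Finset.sum_apply]
      exact integral_finset_sum _ fun m _ => (hL2 m).integrable one_le_two
    rw [this]
    have : ∀ m, ∫ ω, X m ω ∂P = ∫ ω, X ⟨0,hM⟩ ω ∂P := fun m => (hid m).integral_eq
    simp [this, Finset.sum_const]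
  have hvar : variance S P = M * variance (X ⟨0,hM⟩) P := by
    rw [hS, IndepFun.variance_sum (fun m _ => hL2 m) (fun i _ j _ hij => hind hij)]
    have : ∀ m : Fin M, variance (X m) P = variance (X ⟨0,hM⟩) P := fun m => (hid m).variance_eq
    simp [this, Finset.sum_const]
  have hveq : variance S P = ∫ ω, (S ω - ∫ ω', S ω' ∂P)^2 ∂P := by
    rw [variance_eq_integral hSL2.aestronglyMeasurable.aemeasurable]
  have heq : ∀ ω, ((M:ℝ)⁻¹ * ∑ m, X m ω - ∫ ω', X ⟨0,hM⟩ ω' ∂P)^2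
      = ((M:ℝ)⁻¹)^2 * (S ω - ∫ ω', S ω' ∂P)^2 := by
    intro ω
    have hMne : (M:ℝ) ≠ 0 := Nat.cast_ne_zero.mpr hM.ne'
    have : S ω = ∑ m, X m ω := by rw [hS]; simp
    rw [hES, ← mul_pow, mul_sub, this]
    congr 3
    field_simp
  calc ∫ ω, ((M:ℝ)⁻¹ * ∑ m, X m ω - ∫ ω', X ⟨0,hM⟩ ω' ∂P)^2 ∂P
      = ((M:ℝ)⁻¹)^2 * ∫ ω, (S ω - ∫ ω', S ω' ∂P)^2 ∂P := by
        rw [← integral_const_mul]; exact integral_congr_ae (ae_of_all _ heq)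
    _ = ((M:ℝ)⁻¹)^2 * (M * variance (X ⟨0,hM⟩) P) := by rw [← hveq, hvar]
    _ ≤ ((M:ℝ)⁻¹)^2 * (M * ∫ ω, (X ⟨0,hM⟩ ω)^2 ∂P) := by
        have h := variance_le_expectation_sq (μ := P) (hL2 ⟨0,hM⟩).aestronglyMeasurable
        simp only [Pi.pow_apply] at h
        have hM0 : (0:ℝ) ≤ M := Nat.cast_nonneg M
        exact mul_le_mul_of_nonneg_left (mul_le_mul_of_nonneg_left h hM0) (by positivity)
    _ = (∫ ω, (X ⟨0,hM⟩ ω)^2 ∂P) / M := by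
        have hMne : (M:ℝ) ≠ 0 := Nat.cast_ne_zero.mpr hM.ne'
        field_simp
/-- If `E[W²|m] ≤ c` a.s. and `g` is `m`-measurable and in L², then `g·W ∈ L²` with
`E[(gW)²] ≤ c·E[g²]`. -/
lemma aux_condexp_sq {Ω : Type*} [m0 : MeasurableSpace Ω] {P : Measure Ω} [IsProbabilityMeasure P]
    {m : MeasurableSpace Ω} (hm : m ≤ m0)
    {g W : Ω → ℝ} (hg : Measurable[m] g) (hW : MemLp W 2 P) (hWmeas : Measurable[m0] W)
    {c : ℝ} (hc : 0 ≤ c)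
    (hcond : ∀ᵐ ω ∂P, (P[(fun ω' => (W ω')^2) | m]) ω ≤ c)
    (hgL2 : MemLp g 2 P) :
    Integrable (fun ω => (g ω * W ω)^2) P ∧
      ∫ ω, (g ω * W ω)^2 ∂P ≤ c * ∫ ω, (g ω)^2 ∂P := by
  have hgmeas : Measurable[m0] g := fun s hs => hm _ (hg hs)
  have hWsq : Integrable (fun ω => (W ω)^2) P := hW.integrable_sq
  set C : ℝ := c * ∫ ω, (g ω)^2 ∂P with hC
  have hgsq : Integrable (fun ω => (g ω)^2) P := hgL2.integrable_sq
  have hC0 : 0 ≤ C := mul_nonneg hc (integral_nonneg fun ω => sq_nonneg _)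
  -- truncations
  set f : ℕ → Ω → ℝ := fun N ω => min ((g ω)^2) N with hf
  have hfmeas : ∀ N, Measurable[m] (f N) := fun N => (hg.pow_const 2).min measurable_const
  have hfmeas0 : ∀ N, Measurable[m0] (f N) := fun N s hs => hm _ (hfmeas N hs)
  have hfnn : ∀ N ω, 0 ≤ f N ω := fun N ω => le_min (sq_nonneg _) (Nat.cast_nonneg _)
  have hfbdd : ∀ N ω, ‖f N ω‖ ≤ (N:ℝ) := fun N ω => by
    rw [Real.norm_eq_abs, abs_of_nonneg (hfnn N ω)]; exact min_le_right _ _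
  have hfle : ∀ N ω, f N ω ≤ (g ω)^2 := fun N ω => min_le_left _ _
  -- each truncated product integral is ≤ C
  have hkey : ∀ N : ℕ, Integrable (fun ω => f N ω * (W ω)^2) P ∧
      ∫ ω, f N ω * (W ω)^2 ∂P ≤ C := by
    intro N
    have hint : Integrable (fun ω => f N ω * (W ω)^2) P :=
      hWsq.bdd_mul (hfmeas0 N).aestronglyMeasurable (ae_of_all _ (hfbdd N))
    refine ⟨hint, ?_⟩
    have hpull : P[(fun ω => f N ω * (W ω)^2)|m]
        =ᵐ[P] fun ω => f N ω * (P[(fun ω' => (W ω')^2)|m]) ω := by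
      have := condExp_mul_of_stronglyMeasurable_left (μ := P) (m := m)
        ((hfmeas N).stronglyMeasurable) (f := f N) (g := fun ω => (W ω)^2) ?_ hWsq
      · exact this
      · exact hint
    have hintc : Integrable (fun ω => f N ω * (P[(fun ω' => (W ω')^2)|m]) ω) P :=
      integrable_condExp.bdd_mul (hfmeas0 N).aestronglyMeasurable (ae_of_all _ (hfbdd N))
    calc ∫ ω, f N ω * (W ω)^2 ∂P
        = ∫ ω, (P[(fun ω' => f N ω' * (W ω')^2)|m]) ω ∂P := (integral_condExp hm).symm
      _ = ∫ ω, f N ω * (P[(fun ω' => (W ω')^2)|m]) ω ∂P := integral_congr_ae hpull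
      _ ≤ ∫ ω, f N ω * c ∂P := by
          refine integral_mono_ae hintc ((hgsq.mono' (hfmeas0 N).aestronglyMeasurable
            (ae_of_all _ fun ω => by
              rw [Real.norm_eq_abs, abs_of_nonneg (hfnn N ω)]; exact hfle N ω)).mul_const c) ?_
          filter_upwards [hcond] with ω hω
          exact mul_le_mul_of_nonneg_left hω (hfnn N ω)
      _ ≤ C := by
          rw [hC]
          have : ∫ ω, f N ω * c ∂P = c * ∫ ω, f N ω ∂P := by
            rw [mul_comm c]; exact integral_mul_const _ _
          rw [this]
          refine mul_le_mul_of_nonneg_left ?_ hc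
          refine integral_mono (hgsq.mono' (hfmeas0 N).aestronglyMeasurable
            (ae_of_all _ fun ω => by
              rw [Real.norm_eq_abs, abs_of_nonneg (hfnn N ω)]; exact hfle N ω)) hgsq ?_
          intro ω; exact hfle N ω
  -- monotone convergence in `ℝ≥0∞`
  have hsup : ∀ ω, (⨆ N : ℕ, ENNReal.ofReal (f N ω * (W ω)^2))
      = ENNReal.ofReal ((g ω * W ω)^2) := by
    intro ω
    have hprod : (g ω * W ω)^2 = (g ω)^2 * (W ω)^2 := by ring
    refine le_antisymm (iSup_le fun N => ?_) ?_
    · refine ENNReal.ofReal_le_ofReal ?_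
      rw [hprod]
      exact mul_le_mul_of_nonneg_right (hfle N ω) (sq_nonneg _)
    · have hN : (g ω)^2 ≤ (⌈(g ω)^2⌉₊ : ℝ) := Nat.le_ceil _
      have : f ⌈(g ω)^2⌉₊ ω = (g ω)^2 := min_eq_left hN
      calc ENNReal.ofReal ((g ω * W ω)^2)
          = ENNReal.ofReal (f ⌈(g ω)^2⌉₊ ω * (W ω)^2) := by rw [this, hprod]
        _ ≤ ⨆ N : ℕ, ENNReal.ofReal (f N ω * (W ω)^2) := le_iSup (fun N : ℕ => ENNReal.ofReal (f N ω * (W ω)^2)) ⌈(g ω)^2⌉₊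
  have hmono : Monotone fun N : ℕ => fun ω => ENNReal.ofReal (f N ω * (W ω)^2) := by
    intro N N' hNN'
    intro ω
    refine ENNReal.ofReal_le_ofReal (mul_le_mul_of_nonneg_right ?_ (sq_nonneg _))
    exact min_le_min le_rfl (Nat.cast_le.mpr hNN')
  have hlin : ∫⁻ ω, ENNReal.ofReal ((g ω * W ω)^2) ∂P ≤ ENNReal.ofReal C := by
    have := lintegral_iSup (μ := P)
      (f := fun N ω => ENNReal.ofReal (f N ω * (W ω)^2))
      (fun N => ((hfmeas0 N).mul (hWmeas.pow_const 2)).ennreal_ofReal) hmono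
    calc ∫⁻ ω, ENNReal.ofReal ((g ω * W ω)^2) ∂P
        = ∫⁻ ω, ⨆ N : ℕ, ENNReal.ofReal (f N ω * (W ω)^2) ∂P := by
          refine lintegral_congr fun ω => (hsup ω).symm
      _ = ⨆ N : ℕ, ∫⁻ ω, ENNReal.ofReal (f N ω * (W ω)^2) ∂P := this
      _ ≤ ENNReal.ofReal C := by
          refine iSup_le fun N => ?_
          rw [← ofReal_integral_eq_lintegral_ofReal (hkey N).1
            (ae_of_all _ fun ω => mul_nonneg (hfnn N ω) (sq_nonneg _))]
          exact ENNReal.ofReal_le_ofReal (hkey N).2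
  have hmeasgw : Measurable[m0] fun ω => (g ω * W ω)^2 := (hgmeas.mul hWmeas).pow_const 2
  have hint : Integrable (fun ω => (g ω * W ω)^2) P := by
    refine ⟨hmeasgw.aestronglyMeasurable, ?_⟩
    rw [hasFiniteIntegral_iff_norm]
    have : ∀ ω, ENNReal.ofReal ‖(g ω * W ω)^2‖ = ENNReal.ofReal ((g ω * W ω)^2) := fun ω => by
      rw [Real.norm_eq_abs, abs_of_nonneg (sq_nonneg _)]
    calc ∫⁻ ω, ENNReal.ofReal ‖(g ω * W ω)^2‖ ∂P
        = ∫⁻ ω, ENNReal.ofReal ((g ω * W ω)^2) ∂P := lintegral_congr fun ω => this ω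
      _ ≤ ENNReal.ofReal C := hlin
      _ < ⊤ := ENNReal.ofReal_lt_top
  refine ⟨hint, ?_⟩
  have := ofReal_integral_eq_lintegral_ofReal hint (ae_of_all _ fun ω => sq_nonneg _)
  rw [← ENNReal.ofReal_le_ofReal_iff hC0, this]
  exact hlin
/-- Pythagoras / bias decomposition for the projection. -/
lemma aux_key {n K : ℕ} (μ : Measure (Fin n → ℝ)) [IsProbabilityMeasure μ]
    (ψ : Fin K → (Fin n → ℝ) → ℝ) (hψL2 : ∀ k, MemLp (ψ k) 2 μ)
    (G : Matrix (Fin K) (Fin K) ℝ) (hGdef : ∀ k l, G k l = ∫ z, ψ k z * ψ l z ∂μ)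
    (v : (Fin n → ℝ) → ℝ) (hv : MemLp v 2 μ)
    (gs : Fin K → ℝ)
    (hortho : ∀ k, ∫ z, ψ k z * ((∑ l, gs l * ψ l z) - v z) ∂μ = 0)
    (c : Fin K → ℝ) :
    ∫ z, ((∑ k, c k * ψ k z) - v z)^2 ∂μ
      = (c - gs) ⬝ᵥ G.mulVec (c - gs)
        + ∫ z, ((∑ k, gs k * ψ k z) - v z)^2 ∂μ := by
  set d : Fin K → ℝ := c - gs with hd
  set w : (Fin n → ℝ) → ℝ := fun z => ∑ k, d k * ψ k z with hw
  set e : (Fin n → ℝ) → ℝ := fun z => (∑ k, gs k * ψ k z) - v z with he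
  have hwL2 : MemLp w 2 μ := by
    have : MemLp (∑ k, fun z => d k * ψ k z) 2 μ :=
      memLp_finset_sum' _ fun k _ => (hψL2 k).const_mul (d k)
    convert this using 1
    funext z; simp [hw]
  have hsL2 : MemLp (fun z => ∑ k, gs k * ψ k z) 2 μ := by
    have : MemLp (∑ k, fun z => gs k * ψ k z) 2 μ :=
      memLp_finset_sum' _ fun k _ => (hψL2 k).const_mul (gs k)
    convert this using 1
    funext z; simp
  have heL2 : MemLp e 2 μ := hsL2.sub hv
  have hdecomp : ∀ z, (∑ k, c k * ψ k z) - v z = w z + e z := by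
    intro z
    rw [hw, he, hd]
    simp only [Pi.sub_apply, sub_mul]
    rw [Finset.sum_sub_distrib]
    ring
  have hwwint : Integrable (fun z => w z * w z) μ := aux_int_mul hwL2 hwL2
  have hweint : Integrable (fun z => w z * e z) μ := aux_int_mul hwL2 heL2
  have heeint : Integrable (fun z => e z * e z) μ := aux_int_mul heL2 heL2
  have hsplit : ∫ z, ((∑ k, c k * ψ k z) - v z)^2 ∂μ
      = ∫ z, w z * w z ∂μ + 2 * ∫ z, w z * e z ∂μ + ∫ z, e z * e z ∂μ := by
    have h1 : ∀ z, ((∑ k, c k * ψ k z) - v z)^2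
        = w z * w z + 2 * (w z * e z) + e z * e z := by
      intro z; rw [hdecomp z]; ring
    rw [integral_congr_ae (ae_of_all _ h1), integral_add (by
      exact (hwwint.add (hweint.const_mul 2))) heeint,
      integral_add hwwint (hweint.const_mul 2), integral_const_mul]
  have hwe0 : ∫ z, w z * e z ∂μ = 0 := by
    have h1 : ∀ z, w z * e z = ∑ k, d k * (ψ k z * e z) := by
      intro z; rw [hw]; rw [Finset.sum_mul]; congr 1; funext k; ring
    rw [integral_congr_ae (ae_of_all _ h1),
      integral_finset_sum _ fun k _ => (aux_int_mul (hψL2 k) heL2).const_mul (d k)]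
    refine Finset.sum_eq_zero fun k _ => ?_
    rw [integral_const_mul, hortho k, mul_zero]
  have hww : ∫ z, w z * w z ∂μ = d ⬝ᵥ G.mulVec d := by
    have h1 : ∀ z, w z * w z = ∑ k, ∑ l, d k * d l * (ψ k z * ψ l z) := by
      intro z
      rw [hw, Finset.sum_mul_sum]
      refine Finset.sum_congr rfl fun k _ => Finset.sum_congr rfl fun l _ => by ring
    rw [integral_congr_ae (ae_of_all _ h1)]
    rw [integral_finset_sum _ fun k _ => ?_]
    · have : ∀ k : Fin K, ∫ z, ∑ l, d k * d l * (ψ k z * ψ l z) ∂μ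
          = ∑ l, d k * d l * G k l := by
        intro k
        rw [integral_finset_sum _ fun l _ => (aux_int_mul (hψL2 k) (hψL2 l)).const_mul _]
        exact Finset.sum_congr rfl fun l _ => by rw [integral_const_mul, hGdef]
      rw [Finset.sum_congr rfl fun k _ => this k]
      simp only [dotProduct, Matrix.mulVec, dotProduct]
      refine Finset.sum_congr rfl fun k _ => ?_
      rw [Finset.mul_sum]
      exact Finset.sum_congr rfl fun l _ => by ring
    · exact integrable_finset_sum _ fun l _ => (aux_int_mul (hψL2 k) (hψL2 l)).const_mul _
  have hee : ∫ z, e z * e z ∂μ = ∫ z, ((∑ k, gs k * ψ k z) - v z)^2 ∂μ := by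
    refine integral_congr_ae (ae_of_all _ fun z => ?_)
    rw [he]; ring
  rw [hsplit, hwe0, hww, hee]
  ring
/-- Moment facts for `g(U)·V` under a conditional variance bound. -/
lemma aux_prob {Ωt : Type*} [mΩ : MeasurableSpace Ωt] {P : Measure Ωt} [IsProbabilityMeasure P]
    {E : Type*} [mE : MeasurableSpace E]
    (U0 : Ωt → E) (V0 : Ωt → ℝ) (hU0 : Measurable[mΩ] U0) (hV0 : Measurable[mΩ] V0)
    (hVL2 : MemLp V0 2 P)
    (v' : E → ℝ) (hv'meas : Measurable[mE] v') {A σ : ℝ} (hA0 : 0 ≤ A) (hv'bd : ∀ z, |v' z| ≤ A)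
    (hcond : P[V0 | MeasurableSpace.comap U0 mE] =ᵐ[P] fun ω => v' (U0 ω))
    (hσ : ∀ᵐ ω ∂P, (P[(fun ω' => (V0 ω' - v' (U0 ω'))^2) |
        MeasurableSpace.comap U0 mE]) ω ≤ σ^2)
    (g : E → ℝ) (hgmeas : Measurable[mE] g) (hgL2 : MemLp (fun ω => g (U0 ω)) 2 P) :
    MemLp (fun ω => g (U0 ω) * V0 ω) 2 P ∧
      ∫ ω, (g (U0 ω) * V0 ω)^2 ∂P ≤ (σ^2 + A^2) * ∫ ω, (g (U0 ω))^2 ∂P ∧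
      ∫ ω, g (U0 ω) * V0 ω ∂P = ∫ ω, g (U0 ω) * v' (U0 ω) ∂P := by
  set m : MeasurableSpace Ωt := MeasurableSpace.comap U0 mE with hmdef
  have hm : m ≤ mΩ := by rw [hmdef]; exact measurable_iff_comap_le.mp hU0
  have hU0m : Measurable[m] U0 := measurable_iff_comap_le.mpr le_rfl
  set vU : Ωt → ℝ := fun ω => v' (U0 ω) with hvUdef
  have hvUm : Measurable[m] vU := hv'meas.comp hU0m
  have hvUsm : StronglyMeasurable[m] vU := hvUm.stronglyMeasurable
  have hvUmeas : Measurable[mΩ] vU := hv'meas.comp hU0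
  have hvUbd : ∀ ω, ‖vU ω‖ ≤ A := fun ω => by rw [Real.norm_eq_abs]; exact hv'bd _
  have hvUL2 : MemLp vU 2 P :=
    MemLp.of_bound hvUmeas.aestronglyMeasurable A (ae_of_all _ hvUbd)
  have hWint : Integrable V0 P := hVL2.integrable one_le_two
  -- the three pieces of V0² = (V0-vU)² + (2·vU·V0 - vU²)
  set f1 : Ωt → ℝ := fun ω => (V0 ω - vU ω)^2 with hf1def
  set f2 : Ωt → ℝ := fun ω => vU ω * V0 ω with hf2def
  set f3 : Ωt → ℝ := fun ω => (vU ω)^2 with hf3def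
  have hf1int : Integrable f1 P := by
    have h := (hVL2.sub hvUL2).integrable_sq
    refine h.congr (ae_of_all _ fun ω => ?_)
    simp [hf1def]
  have hf2int : Integrable f2 P := hWint.bdd_mul hvUmeas.aestronglyMeasurable (ae_of_all _ hvUbd)
  have hf3int : Integrable f3 P := hvUL2.integrable_sq
  have hfun : (fun ω => (V0 ω)^2) = f1 + ((2:ℝ) • f2 - f3) := by
    funext ω
    simp only [Pi.add_apply, Pi.sub_apply, Pi.smul_apply, smul_eq_mul, hf1def, hf2def, hf3def]
    ring
  have hcond2 : P[f2|m] =ᵐ[P] f3 := by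
    have h1 : P[(fun ω => vU ω * V0 ω)|m] =ᵐ[P] fun ω => vU ω * (P[V0|m]) ω := by
      have := condExp_mul_of_stronglyMeasurable_left (μ := P) hvUsm
        (f := vU) (g := V0) (hf2int.congr (ae_of_all _ fun ω => rfl)) hWint
      exact this
    refine (h1.trans ?_)
    filter_upwards [hcond] with ω hω
    rw [hf3def, hω]
    ring
  have hcond3 : P[f3|m] = f3 := condExp_of_stronglyMeasurable hm
    ((hv'meas.pow_const 2).comp hU0m).stronglyMeasurable hf3int
  have hcondW2 : ∀ᵐ ω ∂P, (P[(fun ω' => (V0 ω')^2)|m]) ω ≤ σ^2 + A^2 := by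
    have hadd : P[(fun ω => (V0 ω)^2)|m]
        =ᵐ[P] P[f1|m] + P[(2:ℝ) • f2 - f3|m] := by
      rw [hfun]
      exact condExp_add hf1int (((hf2int.smul (2:ℝ)).sub hf3int)) m
    have hsub : P[(2:ℝ) • f2 - f3|m] =ᵐ[P] (2:ℝ) • P[f2|m] - P[f3|m] := by
      refine (condExp_sub (hf2int.smul (2:ℝ)) hf3int m).trans ?_
      have := condExp_smul (μ := P) (m := m) (2:ℝ) f2
      filter_upwards [this] with ω hω
      simp only [Pi.sub_apply, Pi.smul_apply, smul_eq_mul] at *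
      rw [hω]
    filter_upwards [hadd, hsub, hσ, hcond2] with ω h1 h2 h3 h4
    have hvA : (vU ω)^2 ≤ A^2 := by
      have := hv'bd (U0 ω)
      have h5 := abs_le.mp this
      nlinarith [h5.1, h5.2]
    rw [h1]
    simp only [Pi.add_apply]
    rw [h2]
    simp only [Pi.sub_apply, Pi.smul_apply, smul_eq_mul, h4, hcond3]
    have h5 : (P[f1|m]) ω ≤ σ^2 := h3
    have h6 : f3 ω = (vU ω)^2 := rfl
    nlinarith [h5, hvA, h6]
  -- apply the truncation lemma
  have hsA : (0:ℝ) ≤ σ^2 + A^2 := by positivity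
  obtain ⟨hint, hbd⟩ := aux_condexp_sq (m0 := mΩ) hm (hgmeas.comp hU0m) hVL2 hV0 hsA hcondW2 hgL2
  have hYL2 : MemLp (fun ω => g (U0 ω) * V0 ω) 2 P := by
    refine (memLp_two_iff_integrable_sq ?_).mpr hint
    exact ((hgmeas.comp hU0).mul hV0).aestronglyMeasurable
  refine ⟨hYL2, hbd, ?_⟩
  -- pull-out property for the mean
  have hgsm : StronglyMeasurable[m] fun ω => g (U0 ω) := (hgmeas.comp hU0m).stronglyMeasurable
  have hYint : Integrable (fun ω => g (U0 ω) * V0 ω) P := hYL2.integrable one_le_two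
  have hpull : P[(fun ω => g (U0 ω) * V0 ω)|m]
      =ᵐ[P] fun ω => g (U0 ω) * (P[V0|m]) ω := by
    have := condExp_mul_of_stronglyMeasurable_left (μ := P) hgsm
      (f := fun ω => g (U0 ω)) (g := V0) (hYint.congr (ae_of_all _ fun ω => rfl)) hWint
    exact this
  calc ∫ ω, g (U0 ω) * V0 ω ∂P
      = ∫ ω, (P[(fun ω' => g (U0 ω') * V0 ω')|m]) ω ∂P := (integral_condExp hm).symm
    _ = ∫ ω, g (U0 ω) * (P[V0|m]) ω ∂P := integral_congr_ae hpull
    _ = ∫ ω, g (U0 ω) * v' (U0 ω) ∂P := by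
        refine integral_congr_ae ?_
        filter_upwards [hcond] with ω hω
        rw [hω]

/-- Theorem `psth` of the paper: error bound for the
pseudo-regression estimator. -/
theorem pseudo_regression_error_bound
    (n K M : ℕ) (hn : 0 < n) (hK : 0 < K) (hM : 0 < M)
    (μ : Measure (Fin n → ℝ)) [IsProbabilityMeasure μ]
    (ψ : Fin K → (Fin n → ℝ) → ℝ)
    (hψmeas : ∀ k, Measurable (ψ k))
    (hψL2 : ∀ k, MemLp (ψ k) 2 μ)
    (G : Matrix (Fin K) (Fin K) ℝ)
    (hGdef : ∀ k l, G k l = ∫ z, ψ k z * ψ l z ∂μ)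
    (hGinv : IsUnit G.det)
    (Ω : Type*) [MeasurableSpace Ω] (P : Measure Ω) [IsProbabilityMeasure P]
    (U : Fin M → Ω → (Fin n → ℝ)) (V : Fin M → Ω → ℝ)
    (hUmeas : ∀ m, Measurable (U m)) (hVmeas : ∀ m, Measurable (V m))
    -- the pairs (U m, V m) are independent ...
    (hindep : iIndepFun (fun m ω => (U m ω, V m ω)) P)
    -- ... and identically distributed,
    (hident : ∀ m, IdentDistrib (fun ω => (U m ω, V m ω))
      (fun ω => (U ⟨0, hM⟩ ω, V ⟨0, hM⟩ ω)) P P)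
    -- the law of U⁽¹⁾ is μ,
    (hlaw : Measure.map (U ⟨0, hM⟩) P = μ)
    (hVL2 : MemLp (V ⟨0, hM⟩) 2 P)
    -- v is (a Borel version of) the regression function E[V⁽¹⁾ | U⁽¹⁾] = v(U⁽¹⁾) a.s.
    (v : (Fin n → ℝ) → ℝ) (hvmeas : Measurable v)
    (hcond : P[(fun ω => V ⟨0, hM⟩ ω) |
        MeasurableSpace.comap (U ⟨0, hM⟩) inferInstance]
      =ᵐ[P] fun ω => v (U ⟨0, hM⟩ ω))
    (A σ lmin lmax : ℝ)
    -- |v| ≤ A μ-a.e.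
    (hA : ∀ᵐ z ∂μ, |v z| ≤ A)
    -- conditional variance bound E[(V⁽¹⁾ - v(U⁽¹⁾))² | U⁽¹⁾] ≤ σ² a.s.
    (hσ : ∀ᵐ ω ∂P, (P[(fun ω' => (V ⟨0, hM⟩ ω' - v (U ⟨0, hM⟩ ω'))^2) |
        MeasurableSpace.comap (U ⟨0, hM⟩) inferInstance]) ω ≤ σ^2)
    (hlmin : 0 < lmin) (hminmax : lmin ≤ lmax)
    -- eigenvalue bounds for the Gram matrix: λmin‖x‖² ≤ xᵀGx ≤ λmax‖x‖²
    (hquad : ∀ x : Fin K → ℝ,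
      lmin * ∑ k, (x k)^2 ≤ x ⬝ᵥ G.mulVec x ∧ x ⬝ᵥ G.mulVec x ≤ lmax * ∑ k, (x k)^2)
    -- the pseudo-regression coefficients γ̃ = (1/M)·G⁻¹·𝕄ᵀ𝕐
    (γ : Ω → Fin K → ℝ)
    (hγ : ∀ ω, γ ω = (M : ℝ)⁻¹ • G⁻¹.mulVec (fun k => ∑ m, ψ k (U m ω) * V m ω))
    -- the pseudo-regression estimator ṽ = Σ γ̃_k ψ_k
    (vtil : Ω → (Fin n → ℝ) → ℝ)
    (hvtil : ∀ ω z, vtil ω z = ∑ k, γ ω k * ψ k z) :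
    ∫ ω, (∫ z, (vtil ω z - v z)^2 ∂μ) ∂P
      ≤ (lmax / lmin) * (σ^2 + A^2) * K / M
        + ⨅ c : Fin K → ℝ, ∫ z, ((∑ k, c k * ψ k z) - v z)^2 ∂μ := by
  classical
  set U0 : Ω → (Fin n → ℝ) := U ⟨0, hM⟩ with hU0def
  set V0 : Ω → ℝ := V ⟨0, hM⟩ with hV0def
  have hU0 : Measurable U0 := hUmeas _
  have hV0 : Measurable V0 := hVmeas _
  have hA0 : 0 ≤ A := by
    obtain ⟨z, hz⟩ := hA.exists
    exact (abs_nonneg _).trans hz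
  have hsA0 : 0 ≤ σ^2 + A^2 := by positivity
  have hM0 : (0:ℝ) < M := Nat.cast_pos.mpr hM
  -- truncated version of v
  set v' : (Fin n → ℝ) → ℝ := fun z => max (min (v z) A) (-A) with hv'def
  have hv'meas : Measurable v' := (hvmeas.min measurable_const).max measurable_const
  have hv'bd : ∀ z, |v' z| ≤ A := by
    intro z
    rw [abs_le]
    exact ⟨le_max_right _ _, max_le (min_le_right _ _) (by linarith)⟩
  have hv'eq : v' =ᵐ[μ] v := by
    filter_upwards [hA] with z hz
    obtain ⟨h1, h2⟩ := abs_le.mp hz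
    show max (min (v z) A) (-A) = v z
    rw [min_eq_left h2, max_eq_left h1]
  have hv'P : (fun ω => v' (U0 ω)) =ᵐ[P] fun ω => v (U0 ω) := by
    have h1 : ∀ᵐ z ∂(Measure.map U0 P), v' z = v z := by rw [hlaw]; exact hv'eq
    exact (ae_map_iff hU0.aemeasurable (measurableSet_eq_fun hv'meas hvmeas)).mp h1
  -- conditional hypotheses in terms of v'
  have hcond' : P[V0 | MeasurableSpace.comap U0 inferInstance]
      =ᵐ[P] fun ω => v' (U0 ω) := hcond.trans hv'P.symm
  have hσ' : ∀ᵐ ω ∂P, (P[(fun ω' => (V0 ω' - v' (U0 ω'))^2) |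
      MeasurableSpace.comap U0 inferInstance]) ω ≤ σ^2 := by
    have he : (fun ω' => (V0 ω' - v' (U0 ω'))^2)
        =ᵐ[P] (fun ω' => (V0 ω' - v (U0 ω'))^2) := by
      filter_upwards [hv'P] with ω h
      rw [h]
    have h2 := condExp_congr_ae (μ := P)
      (m := MeasurableSpace.comap U0 inferInstance) he
    filter_upwards [hσ, h2] with ω h1 h3
    rw [h3]; exact h1
  -- L² facts for ψ k ∘ U0 and the moment bounds
  have hψU : ∀ k, MemLp (fun ω => ψ k (U0 ω)) 2 P := fun k =>
    (memLp_map_measure_iff (hψmeas k).aestronglyMeasurable hU0.aemeasurable).mp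
      (by rw [hlaw]; exact hψL2 k)
  have hprob : ∀ k, MemLp (fun ω => ψ k (U0 ω) * V0 ω) 2 P ∧
      ∫ ω, (ψ k (U0 ω) * V0 ω)^2 ∂P ≤ (σ^2 + A^2) * ∫ ω, (ψ k (U0 ω))^2 ∂P ∧
      ∫ ω, ψ k (U0 ω) * V0 ω ∂P = ∫ ω, ψ k (U0 ω) * v' (U0 ω) ∂P := fun k =>
    aux_prob U0 V0 hU0 hV0 hVL2 v' hv'meas hA0 hv'bd hcond' hσ' (ψ k) (hψmeas k) (hψU k)
  have hGkk : ∀ k, ∫ ω, (ψ k (U0 ω))^2 ∂P = G k k := by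
    intro k
    rw [hGdef k k, ← hlaw,
      integral_map hU0.aemeasurable (f := fun z => ψ k z * ψ k z) ((hψmeas k).mul (hψmeas k)).aestronglyMeasurable]
    exact integral_congr_ae (ae_of_all _ fun ω => by simp [pow_two])
  set b : Fin K → ℝ := fun k => ∫ z, ψ k z * v' z ∂μ with hbdef
  have hbk : ∀ k, ∫ ω, ψ k (U0 ω) * V0 ω ∂P = b k := by
    intro k
    have h2 : b k = ∫ z, ψ k z * v' z ∂μ := rfl
    rw [(hprob k).2.2, h2, ← hlaw,
      integral_map hU0.aemeasurable (f := fun z => ψ k z * v' z) ((hψmeas k).mul hv'meas).aestronglyMeasurable]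
  have hYsqbd : ∀ k, ∫ ω, (ψ k (U0 ω) * V0 ω)^2 ∂P ≤ (σ^2 + A^2) * G k k := by
    intro k
    have := (hprob k).2.1
    rwa [hGkk k] at this
  -- the projection coefficients
  set γs : Fin K → ℝ := G⁻¹.mulVec b with hγsdef
  have hGγ : G.mulVec γs = b := by
    rw [hγsdef, Matrix.mulVec_mulVec, Matrix.mul_nonsing_inv G hGinv, Matrix.one_mulVec]
  have hvL2μ : MemLp v 2 μ := MemLp.of_bound hvmeas.aestronglyMeasurable A
    (by filter_upwards [hA] with z hz; rw [Real.norm_eq_abs]; exact hz)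
  have hsumL2 : MemLp (fun z => ∑ l, γs l * ψ l z) 2 μ := by
    have : MemLp (∑ l, fun z => γs l * ψ l z) 2 μ :=
      memLp_finset_sum' _ fun l _ => (hψL2 l).const_mul (γs l)
    convert this using 1
    funext z; simp
  have hortho : ∀ k, ∫ z, ψ k z * ((∑ l, γs l * ψ l z) - v z) ∂μ = 0 := by
    intro k
    have hint1 : Integrable (fun z => ψ k z * (∑ l, γs l * ψ l z)) μ :=
      aux_int_mul (hψL2 k) hsumL2
    have hint2 : Integrable (fun z => ψ k z * v z) μ := aux_int_mul (hψL2 k) hvL2μ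
    have hsplit : ∫ z, ψ k z * ((∑ l, γs l * ψ l z) - v z) ∂μ
        = (∫ z, ψ k z * (∑ l, γs l * ψ l z) ∂μ) - ∫ z, ψ k z * v z ∂μ := by
      rw [← integral_sub hint1 hint2]
      exact integral_congr_ae (ae_of_all _ fun z => by ring)
    have hleft : ∫ z, ψ k z * (∑ l, γs l * ψ l z) ∂μ = b k := by
      have h1 : ∀ z, ψ k z * (∑ l, γs l * ψ l z) = ∑ l, γs l * (ψ k z * ψ l z) := by
        intro z; rw [Finset.mul_sum]; exact Finset.sum_congr rfl fun l _ => by ring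
      rw [integral_congr_ae (ae_of_all _ h1),
        integral_finset_sum _ fun l _ => (aux_int_mul (hψL2 k) (hψL2 l)).const_mul (γs l)]
      have h2 : ∀ l, ∫ z, γs l * (ψ k z * ψ l z) ∂μ = γs l * G k l := fun l => by
        rw [integral_const_mul, hGdef]
      rw [Finset.sum_congr rfl fun l _ => h2 l, ← hGγ]
      simp only [Matrix.mulVec, dotProduct]
      exact Finset.sum_congr rfl fun l _ => by ring
    have hright : ∫ z, ψ k z * v z ∂μ = b k := by
      rw [hbdef]
      refine integral_congr_ae ?_
      filter_upwards [hv'eq] with z hz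
      rw [hz]
    rw [hsplit, hleft, hright, sub_self]
  -- key decomposition over μ
  have hkey := aux_key μ ψ hψL2 G hGdef v hvL2μ γs hortho
  set Cst : ℝ := ∫ z, ((∑ k, γs k * ψ k z) - v z)^2 ∂μ with hCstdef
  have hCstle : Cst ≤ ⨅ c : Fin K → ℝ, ∫ z, ((∑ k, c k * ψ k z) - v z)^2 ∂μ := by
    refine le_ciInf fun c => ?_
    rw [hkey c]
    have h1 := (hquad (c - γs)).1
    have h2 : (0:ℝ) ≤ lmin * ∑ k, ((c - γs) k)^2 := by positivity
    linarith
  -- the fluctuation term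
  set δ : Ω → Fin K → ℝ :=
    fun ω k => (M:ℝ)⁻¹ * (∑ m, ψ k (U m ω) * V m ω) - b k with hδdef
  have hγd : ∀ ω, γ ω - γs = G⁻¹.mulVec (δ ω) := by
    intro ω
    have hδω : δ ω = (M:ℝ)⁻¹ • (fun k => ∑ m, ψ k (U m ω) * V m ω) - b := by
      funext k
      simp [hδdef]
    rw [hδω, Matrix.mulVec_sub, Matrix.mulVec_smul, hγ ω, hγsdef]
  set Q : Ω → ℝ := fun ω => δ ω ⬝ᵥ G⁻¹.mulVec (δ ω) with hQdef
  have hQeq : ∀ ω, (γ ω - γs) ⬝ᵥ G.mulVec (γ ω - γs) = Q ω := by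
    intro ω
    rw [hγd ω, hQdef, Matrix.mulVec_mulVec, Matrix.mul_nonsing_inv G hGinv,
      Matrix.one_mulVec, dotProduct_comm]
  have hQle : ∀ ω, Q ω ≤ lmin⁻¹ * ∑ k, (δ ω k)^2 := fun ω =>
    aux_quad_inv G hGinv hlmin (fun x => (hquad x).1) (δ ω)
  have hQnn : ∀ ω, 0 ≤ Q ω := by
    intro ω
    rw [← hQeq ω]
    have h1 := (hquad (γ ω - γs)).1
    have h2 : (0:ℝ) ≤ lmin * ∑ k, ((γ ω - γs) k)^2 := by positivity
    linarith
  have hδmeas : ∀ k, Measurable fun ω => δ ω k := by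
    intro k
    apply Measurable.sub _ measurable_const
    exact measurable_const.mul
      (Finset.measurable_sum _ fun m _ => ((hψmeas k).comp (hUmeas m)).mul (hVmeas m))
  have hQmeas : Measurable Q := by
    have : Q = fun ω => ∑ k, δ ω k * ∑ l, G⁻¹ k l * δ ω l := by
      funext ω
      rw [hQdef]
      simp [Matrix.mulVec, dotProduct]
    rw [this]
    exact Finset.measurable_sum _ fun k _ => (hδmeas k).mul
      (Finset.measurable_sum _ fun l _ => measurable_const.mul (hδmeas l))
  -- L² and variance bound for each coordinate of δ
  have hδL2 : ∀ k, MemLp (fun ω => δ ω k) 2 P := by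
    intro k
    have h1 : MemLp (fun ω => ∑ m, ψ k (U m ω) * V m ω) 2 P := by
      have : MemLp (∑ m, fun ω => ψ k (U m ω) * V m ω) 2 P :=
        memLp_finset_sum' _ fun m _ =>
          ((hident m).comp (((hψmeas k).comp measurable_fst).mul measurable_snd)).symm.memLp_snd
            (hprob k).1
      convert this using 1
      funext ω; simp
    exact (h1.const_mul ((M:ℝ)⁻¹)).sub (memLp_const (b k))
  have hδint : ∀ k, Integrable (fun ω => (δ ω k)^2) P := fun k => (hδL2 k).integrable_sq
  have hδbd : ∀ k, ∫ ω, (δ ω k)^2 ∂P ≤ ((σ^2 + A^2) * G k k) / M := by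
    intro k
    set Y : Fin M → Ω → ℝ := fun m ω => ψ k (U m ω) * V m ω with hYdef
    have hu : Measurable fun p : (Fin n → ℝ) × ℝ => ψ k p.1 * p.2 :=
      ((hψmeas k).comp measurable_fst).mul measurable_snd
    have hidY : ∀ m, IdentDistrib (Y m) (Y ⟨0, hM⟩) P P := fun m => (hident m).comp hu
    have hYL2 : ∀ m, MemLp (Y m) 2 P := fun m => (hidY m).symm.memLp_snd (hprob k).1
    have hindY : Pairwise fun i j => IndepFun (Y i) (Y j) P := fun i j hij =>
      (hindep.indepFun hij).comp hu hu
    have happ := aux_mean_sq hM Y hYL2 hindY hidY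
    have hbY : ∫ ω, Y ⟨0,hM⟩ ω ∂P = b k := hbk k
    have h1 : ∫ ω, (δ ω k)^2 ∂P
        = ∫ ω, ((M:ℝ)⁻¹ * ∑ m, Y m ω - ∫ ω', Y ⟨0,hM⟩ ω' ∂P)^2 ∂P := by
      rw [hbY]
    rw [h1]
    refine happ.trans ?_
    have h2 : ∫ ω, (Y ⟨0,hM⟩ ω)^2 ∂P ≤ (σ^2 + A^2) * G k k := hYsqbd k
    exact (div_le_div_iff_of_pos_right hM0).mpr h2
  -- diagonal entries are at most lmax
  have hGkkle : ∀ k, G k k ≤ lmax := by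
    intro k
    have h := (hquad (fun i => if i = k then 1 else 0)).2
    have h1 : (fun i => if i = k then (1:ℝ) else 0) ⬝ᵥ
        G.mulVec (fun i => if i = k then 1 else 0) = G k k := by
      simp [dotProduct, Matrix.mulVec, ite_mul, mul_ite, Finset.sum_ite_eq, Finset.sum_ite_eq']
    have h2 : ∑ i, ((fun i => if i = k then (1:ℝ) else 0) i)^2 = 1 := by
      simp [ite_pow, Finset.sum_ite_eq']
    rw [h1, h2, mul_one] at h
    exact h
  have hGkknn : ∀ k, 0 ≤ G k k := by
    intro k
    rw [← hGkk k]
    exact integral_nonneg fun ω => sq_nonneg _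
  -- integrability and bound for Q
  have hbound : Integrable (fun ω => lmin⁻¹ * ∑ k, (δ ω k)^2) P :=
    (integrable_finset_sum _ fun k _ => hδint k).const_mul _
  have hQint : Integrable Q P := by
    refine hbound.mono' hQmeas.aestronglyMeasurable (ae_of_all _ fun ω => ?_)
    rw [Real.norm_eq_abs, abs_of_nonneg (hQnn ω)]
    exact hQle ω
  have hQbd : ∫ ω, Q ω ∂P ≤ (lmax / lmin) * (σ^2 + A^2) * K / M := by
    have h1 : ∫ ω, Q ω ∂P ≤ ∫ ω, lmin⁻¹ * ∑ k, (δ ω k)^2 ∂P :=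
      integral_mono hQint hbound hQle
    have h2 : ∫ ω, lmin⁻¹ * ∑ k, (δ ω k)^2 ∂P
        = lmin⁻¹ * ∑ k, ∫ ω, (δ ω k)^2 ∂P := by
      rw [integral_const_mul, integral_finset_sum _ fun k _ => hδint k]
    have h3 : ∑ k, ∫ ω, (δ ω k)^2 ∂P ≤ ∑ k : Fin K, ((σ^2 + A^2) * lmax) / M := by
      refine Finset.sum_le_sum fun k _ => (hδbd k).trans ?_
      have : (σ^2 + A^2) * G k k ≤ (σ^2 + A^2) * lmax :=
        mul_le_mul_of_nonneg_left (hGkkle k) hsA0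
      exact div_le_div_of_nonneg_right this hM0.le
    have h4 : (lmin:ℝ)⁻¹ ≥ 0 := by positivity
    calc ∫ ω, Q ω ∂P ≤ lmin⁻¹ * ∑ k, ∫ ω, (δ ω k)^2 ∂P := by rw [← h2]; exact h1
      _ ≤ lmin⁻¹ * ∑ k : Fin K, ((σ^2 + A^2) * lmax) / M :=
          mul_le_mul_of_nonneg_left h3 h4
      _ = (lmax / lmin) * (σ^2 + A^2) * K / M := by
          rw [Finset.sum_const, Finset.card_univ, Fintype.card_fin]
          have hMne : (M:ℝ) ≠ 0 := hM0.ne'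
          field_simp
          have e : (M:ℝ) * (M:ℝ)⁻¹ = 1 := mul_inv_cancel₀ hMne
          linear_combination (σ^2*lmax*K + A^2*lmax*K) * e
  -- per-ω decomposition and conclusion
  have hper : ∀ ω, ∫ z, (vtil ω z - v z)^2 ∂μ = Q ω + Cst := by
    intro ω
    have h1 : ∫ z, (vtil ω z - v z)^2 ∂μ
        = ∫ z, ((∑ k, γ ω k * ψ k z) - v z)^2 ∂μ := by
      refine integral_congr_ae (ae_of_all _ fun z => ?_)
      simp only [hvtil]
    rw [h1, hkey (γ ω), hQeq ω]
  calc ∫ ω, (∫ z, (vtil ω z - v z)^2 ∂μ) ∂P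
      = ∫ ω, (Q ω + Cst) ∂P := integral_congr_ae (ae_of_all _ hper)
    _ = (∫ ω, Q ω ∂P) + Cst := by
        rw [integral_add hQint (integrable_const Cst), integral_const]
        simp
    _ ≤ (lmax / lmin) * (σ^2 + A^2) * K / M
        + ⨅ c : Fin K → ℝ, ∫ z, ((∑ k, c k * ψ k z) - v z)^2 ∂μ :=
        add_le_add hQbd hCstle
end

section
/- Under the pseudo-regression setup, assume additionally that |v(z)| ≤ A for μ-almost every z and that E[(V⁽¹⁾ − v(U⁽¹⁾))² | U⁽¹⁾] ≤ σ² almost surely. Then for every k = 1,…,K the variance of the k-th empirical moment satisfies Var[((1/M)·𝕄ᵀ𝕐)_k] ≤ (σ² + A²)·G_{kk}/M. -/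
open MeasureTheory ProbabilityTheory Matrix

theorem aux_second_moment_bound
    {α Ω : Type*} [MeasurableSpace α] (m' : MeasurableSpace Ω) [mΩ : MeasurableSpace Ω]
    (hm' : m' ≤ mΩ)
    (μ : Measure α) [IsProbabilityMeasure μ]
    (P : Measure Ω) [IsProbabilityMeasure P]
    (ψ : α → ℝ) (hψmeas : Measurable ψ) (hψL2 : MemLp ψ 2 μ)
    (U0 : Ω → α) (V0 : Ω → ℝ)
    (hU0 : Measurable U0) (hU0m' : Measurable[m'] U0)
    (hlaw : Measure.map U0 P = μ)
    (hVL2 : MemLp V0 2 P)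
    (v : α → ℝ) (hvmeas : Measurable v)
    (hcond : P[V0 | m'] =ᵐ[P] fun ω => v (U0 ω))
    (A σ : ℝ)
    (hA : ∀ᵐ z ∂μ, |v z| ≤ A)
    (hσ : ∀ᵐ ω ∂P, (P[(fun ω' => (V0 ω' - v (U0 ω'))^2) | m']) ω ≤ σ^2) :
    MemLp (fun ω => ψ (U0 ω) * V0 ω) 2 P ∧
      ∫ ω, (ψ (U0 ω) * V0 ω)^2 ∂P ≤ (σ^2 + A^2) * ∫ z, ψ z^2 ∂μ := by
  set w : Ω → ℝ := fun ω => v (U0 ω) with hwdef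
  have hw_sm : StronglyMeasurable[m'] w := (hvmeas.comp hU0m').stronglyMeasurable
  have hw_meas : Measurable w := hvmeas.comp hU0
  -- transported bound
  have hAP : ∀ᵐ ω ∂P, |w ω| ≤ A := by
    have : ∀ᵐ z ∂(Measure.map U0 P), |v z| ≤ A := by rwa [hlaw]
    exact ae_of_ae_map hU0.aemeasurable this
  have hA0 : 0 ≤ A := by
    obtain ⟨ω, hω⟩ := hAP.exists
    exact (abs_nonneg _).trans hω
  -- σ² ≥ 0
  have hσ0 : 0 ≤ σ^2 := by
    have hnn : 0 ≤ᵐ[P] P[(fun ω' => (V0 ω' - w ω')^2) | m'] :=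
      condExp_nonneg (Filter.Eventually.of_forall fun ω => sq_nonneg _)
    obtain ⟨ω, h1, h2⟩ := (hσ.and hnn).exists
    exact h2.trans h1
  set C : ℝ := σ^2 + A^2 with hCdef
  have hC0 : 0 ≤ C := add_nonneg hσ0 (sq_nonneg _)
  -- integrability facts
  have hV2int : Integrable (fun ω => V0 ω ^ 2) P := hVL2.integrable_sq
  have hVint : Integrable V0 P := hVL2.integrable one_le_two
  have hwL2 : MemLp w 2 P :=
    MemLp.of_bound hw_meas.aestronglyMeasurable A
      (hAP.mono fun ω h => by simpa using h)
  have hwint : Integrable w P := hwL2.integrable one_le_two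
  have hVsubw : MemLp (fun ω => V0 ω - w ω) 2 P := hVL2.sub hwL2
  have hVsubw2int : Integrable (fun ω => (V0 ω - w ω)^2) P := hVsubw.integrable_sq
  -- the auxiliary function g = 2V - w
  set g : Ω → ℝ := fun ω => 2 * V0 ω - w ω with hgdef
  have hgint : Integrable g P := (hVint.const_mul 2).sub hwint
  -- E[g | m'] = w a.e.
  have hcondg : P[g | m'] =ᵐ[P] w := by
    have h1 : P[g | m'] =ᵐ[P] P[(fun ω => 2 * V0 ω) | m'] - P[w | m'] :=
      condExp_sub (hVint.const_mul 2) hwint m'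
    have h2 : P[(fun ω => 2 * V0 ω) | m'] =ᵐ[P] (2 : ℝ) • P[V0 | m'] := by
      have := condExp_smul (μ := P) (m := m') (2 : ℝ) V0
      simpa [Pi.smul_def, smul_eq_mul] using this
    have h3' : P[w | m'] = w := condExp_of_stronglyMeasurable hm' hw_sm hwint
    filter_upwards [h1, h2, hcond] with ω e1 e2 e3
    have he3 : (P[V0|m']) ω = w ω := e3
    simp only [Pi.sub_apply] at e1
    rw [e1, e2, h3']
    simp only [Pi.smul_apply, smul_eq_mul, he3, hgdef]
    ring
  -- E[w * g | m'] = w * w a.e.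
  have hpull : P[w * g | m'] =ᵐ[P] w * P[g | m'] :=
    condExp_stronglyMeasurable_mul_of_bound hm' hw_sm hgint A
      (hAP.mono fun ω h => by simpa using h)
  have hwg : P[w * g | m'] =ᵐ[P] fun ω => w ω * w ω := by
    filter_upwards [hpull, hcondg] with ω e1 e2
    simp only [Pi.mul_apply] at e1 ⊢
    rw [e1, e2]
  have hwgint : Integrable (w * g) P :=
    hgint.bdd_mul hw_meas.aestronglyMeasurable
      (hAP.mono fun ω h => by simpa using h)
  -- decomposition V² = (V-w)² + w*g
  have hdecomp : (fun ω => V0 ω ^ 2)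
      = (fun ω => (V0 ω - w ω)^2) + w * g := by
    funext ω
    simp only [Pi.add_apply, Pi.mul_apply, hgdef]
    ring
  -- conditional second moment bound
  have hcondV2 : ∀ᵐ ω ∂P, (P[(fun ω' => V0 ω' ^ 2) | m']) ω ≤ C := by
    have hsum : P[(fun ω' => V0 ω' ^ 2) | m']
        =ᵐ[P] P[(fun ω' => (V0 ω' - w ω')^2) | m'] + P[w * g | m'] := by
      rw [hdecomp]
      exact condExp_add hVsubw2int hwgint m'
    filter_upwards [hsum, hwg, hσ, hAP] with ω e1 e2 e3 e4
    rw [e1]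
    simp only [Pi.add_apply]
    rw [e2]
    have hb : w ω * w ω ≤ A^2 := by
      calc w ω * w ω ≤ |w ω * w ω| := le_abs_self _
        _ = |w ω| * |w ω| := abs_mul _ _
        _ ≤ A * A := mul_le_mul e4 e4 (abs_nonneg _) hA0
        _ = A^2 := (sq A).symm
    simp only [hCdef]
    linarith
  -- integrability of ψ(U0)²
  have hψU2int : Integrable (fun ω => ψ (U0 ω)^2) P := by
    have h1 : Integrable (fun z => ψ z ^ 2) μ := hψL2.integrable_sq
    rw [← hlaw] at h1
    exact (integrable_map_measure ((hψmeas.pow_const 2).aestronglyMeasurable)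
      hU0.aemeasurable).mp h1
  have hψU2eq : ∫ ω, ψ (U0 ω)^2 ∂P = ∫ z, ψ z^2 ∂μ := by
    rw [← hlaw]
    exact (integral_map hU0.aemeasurable
      ((hψmeas.pow_const 2).aestronglyMeasurable)).symm
  have hψ2nonneg : 0 ≤ ∫ z, ψ z^2 ∂μ := integral_nonneg fun z => sq_nonneg _
  -- truncated bound
  have step : ∀ c : ℕ, ∫ ω, min (ψ (U0 ω)^2) c * V0 ω ^2 ∂P
      ≤ C * ∫ z, ψ z^2 ∂μ := by
    intro c
    set fc : Ω → ℝ := fun ω => min (ψ (U0 ω)^2) c with hfcdef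
    have hfc_sm : StronglyMeasurable[m'] fc :=
      (((hψmeas.pow_const 2).min measurable_const).comp hU0m').stronglyMeasurable
    have hfc_meas : Measurable fc := ((hψmeas.pow_const 2).min measurable_const).comp hU0
    have hfc_nonneg : ∀ ω, 0 ≤ fc ω := fun ω => le_min (sq_nonneg _) (Nat.cast_nonneg c)
    have hfc_le : ∀ ω, fc ω ≤ c := fun ω => min_le_right _ _
    have hfc_bound : ∀ᵐ ω ∂P, ‖fc ω‖ ≤ (c : ℝ) :=
      Filter.Eventually.of_forall fun ω => by
        rw [Real.norm_eq_abs, abs_of_nonneg (hfc_nonneg ω)]; exact hfc_le ω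
    have hfcV2int : Integrable (fc * fun ω => V0 ω ^2) P :=
      hV2int.bdd_mul hfc_meas.aestronglyMeasurable hfc_bound
    have hpull2 : P[fc * (fun ω => V0 ω ^2) | m']
        =ᵐ[P] fc * P[(fun ω => V0 ω ^2) | m'] :=
      condExp_stronglyMeasurable_mul_of_bound hm' hfc_sm hV2int c hfc_bound
    have e1 : ∫ ω, fc ω * V0 ω ^2 ∂P = ∫ ω, (P[fc * (fun ω' => V0 ω' ^2) | m']) ω ∂P :=
      (integral_condExp hm' (f := fc * fun ω' => V0 ω' ^2)).symm
    have e2 : ∫ ω, (P[fc * (fun ω' => V0 ω' ^2) | m']) ω ∂P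
        = ∫ ω, fc ω * (P[(fun ω' => V0 ω' ^2) | m']) ω ∂P :=
      integral_congr_ae (hpull2.mono fun ω h => by simpa using h)
    have hcondint : Integrable (fun ω => fc ω * (P[(fun ω' => V0 ω' ^2) | m']) ω) P := by
      have := integrable_condExp (μ := P) (m := m') (f := fun ω' => V0 ω' ^2)
      |>.bdd_mul hfc_meas.aestronglyMeasurable hfc_bound
      simpa [Pi.mul_apply] using this
    have e3 : ∫ ω, fc ω * (P[(fun ω' => V0 ω' ^2) | m']) ω ∂P
        ≤ ∫ ω, fc ω * C ∂P := by
      refine integral_mono_ae hcondint (((integrable_const C).bdd_mul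
        hfc_meas.aestronglyMeasurable hfc_bound).congr ?_) ?_
      · exact Filter.Eventually.of_forall fun ω => rfl
      · filter_upwards [hcondV2] with ω h
        exact mul_le_mul_of_nonneg_left h (hfc_nonneg ω)
    have e4 : ∫ ω, fc ω * C ∂P ≤ C * ∫ z, ψ z^2 ∂μ := by
      rw [show (fun ω => fc ω * C) = fun ω => C * fc ω by funext ω; ring]
      rw [integral_const_mul]
      refine mul_le_mul_of_nonneg_left ?_ hC0
      rw [← hψU2eq]
      refine integral_mono ?_ hψU2int fun ω => min_le_left _ _
      exact (integrable_const (c : ℝ)).mono' hfc_meas.aestronglyMeasurable hfc_bound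
    calc ∫ ω, fc ω * V0 ω ^2 ∂P
        = ∫ ω, fc ω * (P[(fun ω' => V0 ω' ^2) | m']) ω ∂P := by rw [e1, e2]
      _ ≤ ∫ ω, fc ω * C ∂P := e3
      _ ≤ C * ∫ z, ψ z^2 ∂μ := e4
  -- pointwise identification of the supremum
  have hV0am : AEMeasurable V0 P := hVL2.aestronglyMeasurable.aemeasurable
  have hfmeas : ∀ c : ℕ, AEMeasurable
      (fun ω => ENNReal.ofReal (min (ψ (U0 ω)^2) c * V0 ω ^2)) P := by
    intro c
    exact (((((hψmeas.pow_const 2).min measurable_const).comp hU0).aemeasurable).mul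
      (hV0am.pow_const 2)).ennreal_ofReal
  have hint_c : ∀ c : ℕ, Integrable (fun ω => min (ψ (U0 ω)^2) c * V0 ω ^2) P := by
    intro c
    have := hV2int.bdd_mul
      (f := fun ω => min (ψ (U0 ω)^2) c)
      ((((hψmeas.pow_const 2).min measurable_const).comp hU0).aestronglyMeasurable)
      (Filter.Eventually.of_forall fun ω => by
        rw [Real.norm_eq_abs, abs_of_nonneg (le_min (sq_nonneg _) (Nat.cast_nonneg c))]
        exact min_le_right _ _)
    simpa [Pi.mul_apply] using this
  have key : ∫⁻ ω, ENNReal.ofReal (ψ (U0 ω)^2 * V0 ω ^2) ∂P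
      ≤ ENNReal.ofReal (C * ∫ z, ψ z^2 ∂μ) := by
    have hptw : ∀ ω, (⨆ c : ℕ, ENNReal.ofReal (min (ψ (U0 ω)^2) c * V0 ω ^2))
        = ENNReal.ofReal (ψ (U0 ω)^2 * V0 ω ^2) := by
      intro ω
      apply le_antisymm
      · exact iSup_le fun c => ENNReal.ofReal_le_ofReal
          (mul_le_mul_of_nonneg_right (min_le_left _ _) (sq_nonneg _))
      · refine le_iSup_of_le ⌈ψ (U0 ω)^2⌉₊ ?_
        rw [min_eq_left (Nat.le_ceil _)]
    calc ∫⁻ ω, ENNReal.ofReal (ψ (U0 ω)^2 * V0 ω ^2) ∂P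
        = ∫⁻ ω, ⨆ c : ℕ, ENNReal.ofReal (min (ψ (U0 ω)^2) c * V0 ω ^2) ∂P :=
          lintegral_congr fun ω => (hptw ω).symm
      _ = ⨆ c : ℕ, ∫⁻ ω, ENNReal.ofReal (min (ψ (U0 ω)^2) c * V0 ω ^2) ∂P := by
          refine lintegral_iSup' hfmeas (Filter.Eventually.of_forall fun ω => ?_)
          intro c d hcd
          exact ENNReal.ofReal_le_ofReal (mul_le_mul_of_nonneg_right
            (min_le_min le_rfl (Nat.cast_le.2 hcd)) (sq_nonneg _))
      _ ≤ ENNReal.ofReal (C * ∫ z, ψ z^2 ∂μ) := by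
          refine iSup_le fun c => ?_
          rw [← ofReal_integral_eq_lintegral_ofReal (hint_c c)
            (Filter.Eventually.of_forall fun ω =>
              mul_nonneg (le_min (sq_nonneg _) (Nat.cast_nonneg c)) (sq_nonneg _))]
          exact ENNReal.ofReal_le_ofReal (step c)
  have hXasm : AEStronglyMeasurable (fun ω => ψ (U0 ω) * V0 ω) P :=
    ((hψmeas.comp hU0).aemeasurable.mul hV0am).aestronglyMeasurable
  have hsq_eq : (fun ω => (ψ (U0 ω) * V0 ω)^2) = fun ω => ψ (U0 ω)^2 * V0 ω ^2 := by
    funext ω; ring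
  have hX2int : Integrable (fun ω => (ψ (U0 ω) * V0 ω)^2) P := by
    rw [hsq_eq]
    refine ⟨((((hψmeas.pow_const 2).comp hU0).aemeasurable).mul
      (hV0am.pow_const 2)).aestronglyMeasurable, ?_⟩
    rw [hasFiniteIntegral_iff_ofReal (Filter.Eventually.of_forall fun ω =>
      mul_nonneg (sq_nonneg _) (sq_nonneg _))]
    exact lt_of_le_of_lt key ENNReal.ofReal_lt_top
  constructor
  · exact (memLp_two_iff_integrable_sq hXasm).2 hX2int
  · have e0 : ∫ ω, (ψ (U0 ω) * V0 ω)^2 ∂P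
        = (∫⁻ ω, ENNReal.ofReal (ψ (U0 ω)^2 * V0 ω ^2) ∂P).toReal := by
      rw [hsq_eq]
      rw [integral_eq_lintegral_of_nonneg_ae (Filter.Eventually.of_forall fun ω =>
        mul_nonneg (sq_nonneg _) (sq_nonneg _))
        ((((hψmeas.pow_const 2).comp hU0).aemeasurable).mul
          (hV0am.pow_const 2)).aestronglyMeasurable]
    rw [e0]
    calc (∫⁻ ω, ENNReal.ofReal (ψ (U0 ω)^2 * V0 ω ^2) ∂P).toReal
        ≤ (ENNReal.ofReal (C * ∫ z, ψ z^2 ∂μ)).toReal :=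
          ENNReal.toReal_mono ENNReal.ofReal_ne_top key
      _ = C * ∫ z, ψ z^2 ∂μ := ENNReal.toReal_ofReal (mul_nonneg hC0 hψ2nonneg)
/-- variance bound for the empirical moments,
`Var[((1/M)·𝕄ᵀ𝕐)_k] ≤ (σ² + A²)·G_{kk}/M`. -/
theorem empirical_moment_variance_bound
    (n K M : ℕ) (hn : 0 < n) (hK : 0 < K) (hM : 0 < M)
    (μ : Measure (Fin n → ℝ)) [IsProbabilityMeasure μ]
    (ψ : Fin K → (Fin n → ℝ) → ℝ)
    (hψmeas : ∀ k, Measurable (ψ k))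
    (hψL2 : ∀ k, MemLp (ψ k) 2 μ)
    (G : Matrix (Fin K) (Fin K) ℝ)
    (hGdef : ∀ k l, G k l = ∫ z, ψ k z * ψ l z ∂μ)
    (hGinv : IsUnit G.det)
    (Ω : Type*) [MeasurableSpace Ω] (P : Measure Ω) [IsProbabilityMeasure P]
    (U : Fin M → Ω → (Fin n → ℝ)) (V : Fin M → Ω → ℝ)
    (hUmeas : ∀ m, Measurable (U m)) (hVmeas : ∀ m, Measurable (V m))
    (hindep : iIndepFun (fun m ω => (U m ω, V m ω)) P)
    (hident : ∀ m, IdentDistrib (fun ω => (U m ω, V m ω))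
      (fun ω => (U ⟨0, hM⟩ ω, V ⟨0, hM⟩ ω)) P P)
    (hlaw : Measure.map (U ⟨0, hM⟩) P = μ)
    (hVL2 : MemLp (V ⟨0, hM⟩) 2 P)
    (v : (Fin n → ℝ) → ℝ) (hvmeas : Measurable v)
    (hcond : P[(fun ω => V ⟨0, hM⟩ ω) |
        MeasurableSpace.comap (U ⟨0, hM⟩) inferInstance]
      =ᵐ[P] fun ω => v (U ⟨0, hM⟩ ω))
    (A σ : ℝ)
    -- |v| ≤ A μ-a.e.
    (hA : ∀ᵐ z ∂μ, |v z| ≤ A)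
    -- conditional variance bound E[(V⁽¹⁾ - v(U⁽¹⁾))² | U⁽¹⁾] ≤ σ² a.s.
    (hσ : ∀ᵐ ω ∂P, (P[(fun ω' => (V ⟨0, hM⟩ ω' - v (U ⟨0, hM⟩ ω'))^2) |
        MeasurableSpace.comap (U ⟨0, hM⟩) inferInstance]) ω ≤ σ^2) :
    ∀ k : Fin K,
      variance (fun ω => (M : ℝ)⁻¹ * ∑ m, ψ k (U m ω) * V m ω) P
        ≤ (σ^2 + A^2) * G k k / M := by
  intro k
  have hMpos : (0:ℝ) < M := Nat.cast_pos.2 hM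
  set X : Fin M → Ω → ℝ := fun m ω => ψ k (U m ω) * V m ω with hXdef
  have hg : Measurable (fun p : (Fin n → ℝ) × ℝ => ψ k p.1 * p.2) :=
    ((hψmeas k).comp measurable_fst).mul measurable_snd
  have hidX : ∀ m, IdentDistrib (X m) (X ⟨0, hM⟩) P P := fun m => (hident m).comp hg
  obtain ⟨hX0L2, hX0sq⟩ := aux_second_moment_bound
    (MeasurableSpace.comap (U ⟨0, hM⟩) inferInstance) ((hUmeas _).comap_le)
    μ P (ψ k) (hψmeas k) (hψL2 k) (U ⟨0, hM⟩) (V ⟨0, hM⟩) (hUmeas _)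
    (Measurable.of_comap_le le_rfl) hlaw hVL2 v hvmeas hcond A σ hA hσ
  have hXL2 : ∀ m, MemLp (X m) 2 P := fun m => (hidX m).symm.memLp_snd hX0L2
  -- variance of a single term
  have hGkk : (σ^2 + A^2) * ∫ z, ψ k z ^2 ∂μ = (σ^2 + A^2) * G k k := by
    rw [hGdef k k]
    congr 1
    exact integral_congr_ae (Filter.Eventually.of_forall fun z => by simp [sq])
  have hvar0 : variance (X ⟨0, hM⟩) P ≤ (σ^2 + A^2) * G k k := by
    refine le_trans (variance_le_expectation_sq hX0L2.aestronglyMeasurable) ?_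
    rw [← hGkk]
    simpa using hX0sq
  -- variance of the sum
  have hvarsum : variance (fun ω => ∑ m, X m ω) P = ∑ m : Fin M, variance (X m) P := by
    have hpair : (↑(Finset.univ : Finset (Fin M)) : Set (Fin M)).Pairwise
        fun i j => IndepFun (X i) (X j) P := by
      intro i _ j _ hij
      exact (hindep.indepFun hij).comp hg hg
    have := IndepFun.variance_sum (μ := P) (X := X) (s := Finset.univ)
      (fun i _ => hXL2 i) hpair
    rw [← this]
    congr 1
    funext ω
    simp [Finset.sum_apply]
  have hsumvar : ∑ m : Fin M, variance (X m) P = M * variance (X ⟨0, hM⟩) P := by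
    rw [Finset.sum_congr rfl fun m _ => (hidX m).variance_eq]
    simp [Finset.sum_const, Finset.card_univ, nsmul_eq_mul]
  have hv0nn : 0 ≤ variance (X ⟨0, hM⟩) P := variance_nonneg _ _
  calc variance (fun ω => (M : ℝ)⁻¹ * ∑ m, X m ω) P
      = ((M:ℝ)⁻¹)^2 * variance (fun ω => ∑ m, X m ω) P := variance_const_mul _ _ _
    _ = ((M:ℝ)⁻¹)^2 * (M * variance (X ⟨0, hM⟩) P) := by rw [hvarsum, hsumvar]
    _ = variance (X ⟨0, hM⟩) P / M := by field_simp
    _ ≤ (σ^2 + A^2) * G k k / M := by gcongr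
end

section
/- Let N be a nonnegative random variable, σ > 0, λ > 0, r₀ ≥ 0 and α ∈ ℝ with α + r₀/(2σ) ≥ 0. Suppose that P(N > r) ≤ 1 − Φ(α + r/(2σ)) holds for all r ≥ r₀, where Φ is the standard normal cumulative distribution function. Then E[exp(λN)] ≤ exp(λr₀) + √(π/2)·σ·λ·exp(2σλ(σλ − α))·erfc( (α − 2σλ + r₀/(2σ)) / √2 ). -/
open MeasureTheory Real

/-- The cumulative distribution function of the standard normal distribution,
`Φ(x) = (2π)^{−1/2} ∫_{−∞}^{x} e^{−t²/2} dt`. -/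
noncomputable def stdNormalCDF (x : ℝ) : ℝ :=
  (Real.sqrt (2 * Real.pi))⁻¹ * ∫ t in Set.Iic x, Real.exp (-t^2 / 2)

/-- The complementary error function `erfc(x) = (2/√π) ∫_x^∞ e^{−t²} dt`. -/
noncomputable def erfc (x : ℝ) : ℝ :=
  (2 / Real.sqrt Real.pi) * ∫ t in Set.Ioi x, Real.exp (-t^2)

open Set

namespace GaussTailAux

lemma psi_eq : (fun t : ℝ => Real.exp (-t^2/2)) = fun t : ℝ => Real.exp (-(1/2 : ℝ) * t^2) := by
  funext t; ring_nf

lemma two_pi_eq : Real.sqrt (Real.pi / (1/2)) = Real.sqrt (2 * Real.pi) := by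
  norm_num; rw [mul_comm]

lemma integrable_psi : Integrable (fun t : ℝ => Real.exp (-t^2/2)) := by
  rw [psi_eq]; exact integrable_exp_neg_mul_sq (by norm_num)

lemma integral_psi : ∫ t : ℝ, Real.exp (-t^2/2) = Real.sqrt (2 * Real.pi) := by
  rw [psi_eq, integral_gaussian, two_pi_eq]

lemma integral_psi_Ioi_zero :
    ∫ t in Ioi (0:ℝ), Real.exp (-t^2/2) = Real.sqrt (2 * Real.pi) / 2 := by
  rw [psi_eq, integral_gaussian_Ioi, two_pi_eq]

lemma shift_Ioi (g : ℝ → ℝ) (a d : ℝ) :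
    ∫ x in Ioi a, g (x + d) = ∫ x in Ioi (a + d), g x := by
  have h : MeasurePreserving (fun x : ℝ => x + d) volume volume :=
    measurePreserving_add_right volume d
  have he : MeasurableEmbedding (fun x : ℝ => x + d) :=
    (Homeomorph.addRight d).measurableEmbedding
  rw [← h.setIntegral_preimage_emb he g (Ioi (a + d))]
  congr 1
  ext x
  simp [Set.mem_preimage, Set.mem_Ioi]

lemma integrable_shift {g : ℝ → ℝ} (hg : Integrable g) (d : ℝ) :
    Integrable (fun x => g (x + d)) := by
  have h : MeasurePreserving (fun x : ℝ => x + d) volume volume :=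
    measurePreserving_add_right volume d
  exact (h.integrable_comp_emb (Homeomorph.addRight d).measurableEmbedding).mpr hg

lemma one_sub_cdf (x : ℝ) :
    1 - stdNormalCDF x = (Real.sqrt (2 * Real.pi))⁻¹ * ∫ t in Ioi x, Real.exp (-t^2/2) := by
  have hsplit : (∫ t in Iic x, Real.exp (-t^2/2)) + ∫ t in Ioi x, Real.exp (-t^2/2)
      = Real.sqrt (2 * Real.pi) := by
    rw [intervalIntegral.integral_Iic_add_Ioi integrable_psi.integrableOn integrable_psi.integrableOn]
    exact integral_psi
  have hpos : (0:ℝ) < Real.sqrt (2 * Real.pi) :=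
    Real.sqrt_pos.mpr (by positivity)
  have h2 : ∫ t in Ioi x, Real.exp (-t^2/2)
      = Real.sqrt (2 * Real.pi) - ∫ t in Iic x, Real.exp (-t^2/2) := by linarith
  rw [stdNormalCDF, h2, mul_sub, inv_mul_cancel₀ hpos.ne']

lemma gauss_tail_le {s : ℝ} (hs : 0 ≤ s) :
    1 - stdNormalCDF s ≤ Real.exp (-s^2/2) / 2 := by
  have hpos : (0:ℝ) < Real.sqrt (2 * Real.pi) := Real.sqrt_pos.mpr (by positivity)
  have hshift : Integrable (fun t : ℝ => Real.exp (-(t - s)^2/2)) := by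
    simpa [sub_eq_add_neg] using integrable_shift integrable_psi (-s)
  have hle : ∫ t in Ioi s, Real.exp (-t^2/2)
      ≤ ∫ t in Ioi s, Real.exp (-s^2/2) * Real.exp (-(t - s)^2/2) := by
    apply setIntegral_mono_on integrable_psi.integrableOn
      (hshift.const_mul _).integrableOn measurableSet_Ioi
    intro t ht
    rw [← Real.exp_add]
    apply Real.exp_le_exp.mpr
    have hts : s ≤ t := le_of_lt ht
    nlinarith
  have heq : ∫ t in Ioi s, Real.exp (-s^2/2) * Real.exp (-(t - s)^2/2)
      = Real.exp (-s^2/2) * (Real.sqrt (2 * Real.pi) / 2) := by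
    rw [MeasureTheory.integral_const_mul]
    congr 1
    have : ∫ t in Ioi s, Real.exp (-(t - s)^2/2)
        = ∫ t in Ioi s, (fun u => Real.exp (-u^2/2)) (t + (-s)) := by
      simp only [sub_eq_add_neg]
    rw [this, shift_Ioi (fun u => Real.exp (-u^2/2)) s (-s), add_neg_cancel]
    exact integral_psi_Ioi_zero
  rw [one_sub_cdf]
  calc (Real.sqrt (2 * Real.pi))⁻¹ * ∫ t in Ioi s, Real.exp (-t^2/2)
      ≤ (Real.sqrt (2 * Real.pi))⁻¹ * (Real.exp (-s^2/2) * (Real.sqrt (2 * Real.pi) / 2)) := by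
        rw [← heq]
        exact mul_le_mul_of_nonneg_left hle (by positivity)
    _ = Real.exp (-s^2/2) / 2 := by field_simp

end GaussTailAux

open GaussTailAux in
/-- exponential moment bound from a Gaussian-type tail estimate
(precise form, with the complementary error function). -/
theorem exp_moment_bound_of_gaussian_tail
    (Ω : Type*) [MeasurableSpace Ω] (P : Measure Ω) [IsProbabilityMeasure P]
    (N : Ω → ℝ) (hNmeas : Measurable N) (hNnonneg : ∀ ω, 0 ≤ N ω)
    (σ lam r₀ α : ℝ) (hσ : 0 < σ) (hlam : 0 < lam) (hr₀ : 0 ≤ r₀)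
    (hα : 0 ≤ α + r₀ / (2 * σ))
    (htail : ∀ r : ℝ, r₀ ≤ r →
      (P {ω | r < N ω}).toReal ≤ 1 - stdNormalCDF (α + r / (2 * σ))) :
    ∫ ω, Real.exp (lam * N ω) ∂P
      ≤ Real.exp (lam * r₀)
        + Real.sqrt (Real.pi / 2) * σ * lam * Real.exp (2 * σ * lam * (σ * lam - α))
          * erfc ((α - 2 * σ * lam + r₀ / (2 * σ)) / Real.sqrt 2) := by
  have hσ2 : (0:ℝ) < 2 * σ := by positivity
  set β : ℝ := α - 2 * σ * lam with hβ
  set m : ℝ := α - 2 * σ * lam + r₀ / (2 * σ) with hm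
  set K : ℝ := 2 * σ * lam * (σ * lam - α) with hK
  set G : ℝ := ∫ u in Ioi m, Real.exp (-u^2/2) with hG
  have hGnn : 0 ≤ G :=
    setIntegral_nonneg measurableSet_Ioi fun u _ => (Real.exp_pos _).le
  -- erfc identity : √(π/2) * erfc (m/√2) = G
  have hsqrt2 : (0:ℝ) < Real.sqrt 2 := Real.sqrt_pos.mpr (by norm_num)
  have hsqrtpi : (0:ℝ) < Real.sqrt Real.pi := Real.sqrt_pos.mpr Real.pi_pos
  have herfcint : ∫ t in Ioi (m / Real.sqrt 2), Real.exp (-t^2)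
      = (Real.sqrt 2)⁻¹ * G := by
    have h1 : ∫ t in Ioi (m / Real.sqrt 2), Real.exp (-t^2)
        = ∫ t in Ioi (m / Real.sqrt 2), (fun u => Real.exp (-u^2/2)) (t * Real.sqrt 2) := by
      congr 1; funext t
      simp only
      congr 1
      rw [mul_pow, Real.sq_sqrt (by norm_num : (0:ℝ) ≤ 2)]
      ring
    rw [h1, integral_comp_mul_right_Ioi (fun u => Real.exp (-u^2/2)) _ hsqrt2,
      div_mul_cancel₀ _ hsqrt2.ne', smul_eq_mul]
  have herfc : Real.sqrt (Real.pi / 2) * erfc (m / Real.sqrt 2) = G := by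
    have hss : Real.sqrt 2 ^ 2 = 2 := Real.sq_sqrt (by norm_num)
    rw [erfc, herfcint, Real.sqrt_div Real.pi_pos.le]
    field_simp
    linear_combination (-G) * hss
  -- rewrite RHS using G
  have hRHSeq : Real.exp (lam * r₀)
      + Real.sqrt (Real.pi / 2) * σ * lam * Real.exp K * erfc (m / Real.sqrt 2)
      = Real.exp (lam * r₀) + σ * lam * Real.exp K * G := by
    rw [← herfc]; ring
  rw [hRHSeq]
  set T : ℝ := σ * lam * Real.exp K * G with hT
  have hTnn : 0 ≤ T := mul_nonneg (by positivity) hGnn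
  have hexp1 : (1:ℝ) ≤ Real.exp (lam * r₀) := by
    rw [← Real.exp_zero]; exact Real.exp_le_exp.mpr (by positivity)
  have hexpm : Measurable fun ω => Real.exp (lam * N ω) := (hNmeas.const_mul lam).exp
  rw [MeasureTheory.integral_eq_lintegral_of_nonneg_ae
    (Filter.Eventually.of_forall fun ω => (Real.exp_pos _).le) hexpm.aestronglyMeasurable]
  apply ENNReal.toReal_le_of_le_ofReal (add_nonneg (Real.exp_pos _).le hTnn)
  -- antiderivative computation
  have hanti : ∀ x : ℝ, ∫ t in (0:ℝ)..x, Real.exp (lam * t) * lam = Real.exp (lam * x) - 1 := by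
    intro x
    have hd : ∀ t ∈ Set.uIcc (0:ℝ) x, HasDerivAt (fun u => Real.exp (lam * u))
        (Real.exp (lam * t) * lam) t := by
      intro t _
      have h := ((hasDerivAt_id t).const_mul lam).exp
      simpa using h
    have hgcont : Continuous fun t : ℝ => Real.exp (lam * t) * lam :=
      (Real.continuous_exp.comp (continuous_const.mul continuous_id)).mul continuous_const
    rw [intervalIntegral.integral_eq_sub_of_hasDerivAt hd (hgcont.intervalIntegrable 0 x)]
    simp
  have hgcont : Continuous fun t : ℝ => Real.exp (lam * t) * lam :=
    (Real.continuous_exp.comp (continuous_const.mul continuous_id)).mul continuous_const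
  -- layer cake
  have key := MeasureTheory.lintegral_comp_eq_lintegral_meas_lt_mul P
    (f := N) (g := fun t => Real.exp (lam * t) * lam)
    (Filter.Eventually.of_forall hNnonneg) hNmeas.aemeasurable
    (fun t _ => hgcont.intervalIntegrable 0 t)
    (Filter.Eventually.of_forall fun t => by positivity)
  have hdecomp : ∀ ω, ENNReal.ofReal (Real.exp (lam * N ω))
      = 1 + ENNReal.ofReal (∫ t in (0:ℝ)..N ω, Real.exp (lam * t) * lam) := by
    intro ω
    have he1 : (1:ℝ) ≤ Real.exp (lam * N ω) := by
      rw [← Real.exp_zero]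
      exact Real.exp_le_exp.mpr (mul_nonneg hlam.le (hNnonneg ω))
    rw [hanti (N ω), ← ENNReal.ofReal_one,
      ← ENNReal.ofReal_add zero_le_one (by linarith)]
    congr 1; ring
  -- part 1 bound
  have hpart1 : ∫⁻ t in Ioc 0 r₀, P {a | t < N a} * ENNReal.ofReal (Real.exp (lam * t) * lam)
      ≤ ENNReal.ofReal (Real.exp (lam * r₀) - 1) := by
    have hint1 : IntegrableOn (fun t => Real.exp (lam * t) * lam) (Ioc 0 r₀) :=
      hgcont.integrableOn_Ioc
    calc ∫⁻ t in Ioc 0 r₀, P {a | t < N a} * ENNReal.ofReal (Real.exp (lam * t) * lam)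
        ≤ ∫⁻ t in Ioc 0 r₀, ENNReal.ofReal (Real.exp (lam * t) * lam) := by
          apply lintegral_mono
          intro t
          calc P {a | t < N a} * ENNReal.ofReal (Real.exp (lam * t) * lam)
              ≤ 1 * ENNReal.ofReal (Real.exp (lam * t) * lam) :=
                mul_le_mul_left prob_le_one _
            _ = ENNReal.ofReal (Real.exp (lam * t) * lam) := one_mul _
      _ = ENNReal.ofReal (∫ t in Ioc 0 r₀, Real.exp (lam * t) * lam) :=
          (MeasureTheory.ofReal_integral_eq_lintegral_ofReal hint1
            (Filter.Eventually.of_forall fun t => by positivity)).symm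
      _ = ENNReal.ofReal (Real.exp (lam * r₀) - 1) := by
          rw [← intervalIntegral.integral_of_le hr₀, hanti]
  -- part 2 bound
  have hφint : Integrable (fun t : ℝ => Real.exp (-(t * (2*σ)⁻¹ + β)^2/2)) := by
    have h1 : Integrable (fun x : ℝ => Real.exp (-(x + β)^2/2)) :=
      integrable_shift integrable_psi β
    exact h1.comp_mul_right' (inv_ne_zero hσ2.ne')
  have hptwise : ∀ t ∈ Ioi r₀, P {a | t < N a} * ENNReal.ofReal (Real.exp (lam * t) * lam)
      ≤ ENNReal.ofReal (lam / 2 * Real.exp K * Real.exp (-(t * (2*σ)⁻¹ + β)^2/2)) := by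
    intro t ht
    have htr : r₀ ≤ t := le_of_lt ht
    have hsnn : 0 ≤ α + t / (2 * σ) := by
      have hdd : r₀ / (2*σ) ≤ t / (2*σ) := by gcongr
      linarith
    have h1 : P {a | t < N a} ≤ ENNReal.ofReal (1 - stdNormalCDF (α + t / (2 * σ))) := by
      rw [← ENNReal.ofReal_toReal (measure_ne_top P _)]
      exact ENNReal.ofReal_le_ofReal (htail t htr)
    have h3 : P {a | t < N a} ≤ ENNReal.ofReal (Real.exp (-(α + t/(2*σ))^2/2) / 2) :=
      h1.trans (ENNReal.ofReal_le_ofReal (gauss_tail_le hsnn))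
    calc P {a | t < N a} * ENNReal.ofReal (Real.exp (lam * t) * lam)
        ≤ ENNReal.ofReal (Real.exp (-(α + t/(2*σ))^2/2) / 2)
            * ENNReal.ofReal (Real.exp (lam * t) * lam) := mul_le_mul_left h3 _
      _ = ENNReal.ofReal (Real.exp (-(α + t/(2*σ))^2/2) / 2 * (Real.exp (lam * t) * lam)) :=
          (ENNReal.ofReal_mul (by positivity)).symm
      _ = ENNReal.ofReal (lam / 2 * Real.exp K * Real.exp (-(t * (2*σ)⁻¹ + β)^2/2)) := by
          congr 1
          have hee : Real.exp (-(α + t/(2*σ))^2/2) * Real.exp (lam * t)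
              = Real.exp K * Real.exp (-(t * (2*σ)⁻¹ + β)^2/2) := by
            rw [← Real.exp_add, ← Real.exp_add]
            congr 1
            rw [hK, hβ]
            field_simp
            ring
          linear_combination (lam / 2) * hee
  have hTval : ∫ t in Ioi r₀, lam / 2 * Real.exp K * Real.exp (-(t * (2*σ)⁻¹ + β)^2/2) = T := by
    rw [MeasureTheory.integral_const_mul]
    have hci := integral_comp_mul_right_Ioi (fun x => Real.exp (-(x + β)^2/2)) r₀
      (by positivity : (0:ℝ) < (2*σ)⁻¹)
    rw [hci, shift_Ioi (fun u => Real.exp (-u^2/2)) (r₀ * (2*σ)⁻¹) β,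
      show r₀ * (2*σ)⁻¹ + β = m by rw [hβ, hm, div_eq_mul_inv]; ring]
    rw [smul_eq_mul, inv_inv, ← hG, hT, hK]
    ring
  have hpart2 : ∫⁻ t in Ioi r₀, P {a | t < N a} * ENNReal.ofReal (Real.exp (lam * t) * lam)
      ≤ ENNReal.ofReal T := by
    have hmbl : Measurable fun t : ℝ =>
        ENNReal.ofReal (lam / 2 * Real.exp K * Real.exp (-(t * (2*σ)⁻¹ + β)^2/2)) := by
      apply ENNReal.measurable_ofReal.comp
      fun_prop
    calc ∫⁻ t in Ioi r₀, P {a | t < N a} * ENNReal.ofReal (Real.exp (lam * t) * lam)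
        ≤ ∫⁻ t in Ioi r₀,
            ENNReal.ofReal (lam / 2 * Real.exp K * Real.exp (-(t * (2*σ)⁻¹ + β)^2/2)) :=
          setLIntegral_mono hmbl hptwise
      _ = ENNReal.ofReal (∫ t in Ioi r₀,
            lam / 2 * Real.exp K * Real.exp (-(t * (2*σ)⁻¹ + β)^2/2)) :=
          (MeasureTheory.ofReal_integral_eq_lintegral_ofReal
            ((hφint.const_mul _).integrableOn)
            (Filter.Eventually.of_forall fun t => by positivity)).symm
      _ = ENNReal.ofReal T := by rw [hTval]
  -- assemble
  calc ∫⁻ ω, ENNReal.ofReal (Real.exp (lam * N ω)) ∂P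
      = 1 + ∫⁻ ω, ENNReal.ofReal (∫ t in (0:ℝ)..N ω, Real.exp (lam * t) * lam) ∂P := by
        simp_rw [hdecomp]
        rw [lintegral_add_left measurable_const]
        simp
    _ = 1 + ∫⁻ t in Ioi 0, P {a | t < N a} * ENNReal.ofReal (Real.exp (lam * t) * lam) := by
        rw [key]
    _ = 1 + ((∫⁻ t in Ioc 0 r₀, P {a | t < N a} * ENNReal.ofReal (Real.exp (lam * t) * lam))
          + ∫⁻ t in Ioi r₀, P {a | t < N a} * ENNReal.ofReal (Real.exp (lam * t) * lam)) := by
        rw [← lintegral_union measurableSet_Ioi (Set.Ioc_disjoint_Ioi le_rfl),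
          Set.Ioc_union_Ioi_eq_Ioi hr₀]
    _ ≤ 1 + (ENNReal.ofReal (Real.exp (lam * r₀) - 1) + ENNReal.ofReal T) := by
        gcongr
    _ = ENNReal.ofReal (Real.exp (lam * r₀) + T) := by
        rw [← ENNReal.ofReal_add (by linarith) hTnn, ← ENNReal.ofReal_one,
          ← ENNReal.ofReal_add zero_le_one (by linarith)]
        congr 1; ring
end

section
/- Let N be a nonnegative random variable, σ > 0, λ > 0, r₀ ≥ 0 and α ≥ 0. Suppose that P(N > r) ≤ 1 − Φ(α + r/(2σ)) holds for all r ≥ r₀, where Φ is the standard normal cumulative distribution function. Then E[exp(λN)] ≤ exp(λr₀) + √(2π)·σ·λ·exp(2λ²σ²). -/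
open MeasureTheory Real

section Aux

open Set

lemma aux_gauss_total : ∫ t : ℝ, Real.exp (-t^2/2) = Real.sqrt (2*Real.pi) := by
  have h : ∀ t : ℝ, Real.exp (-t^2/2) = Real.exp (-(1/2) * t^2) := by
    intro t; ring_nf
  simp_rw [h, integral_gaussian]
  rw [div_div_eq_mul_div, div_one, mul_comm]

lemma aux_gauss_half : ∫ t in Ioi (0:ℝ), Real.exp (-t^2/2) = Real.sqrt (2*Real.pi) / 2 := by
  have h : ∀ t : ℝ, Real.exp (-t^2/2) = Real.exp (-(1/2) * t^2) := by
    intro t; ring_nf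
  simp_rw [h, integral_gaussian_Ioi]
  rw [div_div_eq_mul_div, div_one, mul_comm]

lemma aux_gauss_integrable : Integrable (fun t : ℝ => Real.exp (-t^2/2)) := by
  have h : ∀ t : ℝ, Real.exp (-t^2/2) = Real.exp (-(1/2) * t^2) := by
    intro t; ring_nf
  simp_rw [h]
  exact integrable_exp_neg_mul_sq (by norm_num)

lemma aux_shift_Ioi (f : ℝ → ℝ) (x : ℝ) :
    ∫ t in Ioi x, f (t - x) = ∫ s in Ioi (0:ℝ), f s := by
  rw [← integral_indicator measurableSet_Ioi, ← integral_indicator measurableSet_Ioi]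
  rw [← integral_sub_right_eq_self (fun t => (Ioi (0:ℝ)).indicator f t) x]
  congr 1; ext t
  by_cases h : x < t
  · simp [indicator, h, sub_pos.mpr h]
  · simp [indicator, h, fun hh => h (sub_pos.mp hh)]

lemma aux_mill (x : ℝ) (hx : 0 ≤ x) : 1 - stdNormalCDF x ≤ Real.exp (-x^2/2) / 2 := by
  have hs : (0:ℝ) < Real.sqrt (2*Real.pi) :=
    Real.sqrt_pos.mpr (by positivity)
  have htot := intervalIntegral.integral_Iic_add_Ioi (b := x) (μ := volume)
    aux_gauss_integrable.integrableOn aux_gauss_integrable.integrableOn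
  rw [aux_gauss_total] at htot
  have h1 : 1 - stdNormalCDF x
      = (Real.sqrt (2*Real.pi))⁻¹ * ∫ t in Ioi x, Real.exp (-t^2/2) := by
    unfold stdNormalCDF
    have h2 : (Real.sqrt (2*Real.pi))⁻¹ * ((∫ t in Iic x, Real.exp (-t^2/2))
        + ∫ t in Ioi x, Real.exp (-t^2/2)) = 1 := by
      rw [htot]; exact inv_mul_cancel₀ hs.ne'
    rw [mul_add] at h2
    linarith
  rw [h1]
  have hbound : ∫ t in Ioi x, Real.exp (-t^2/2)
      ≤ Real.exp (-x^2/2) * (Real.sqrt (2*Real.pi) / 2) := by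
    have hcomp : IntegrableOn (fun t : ℝ => Real.exp (-x^2/2) * Real.exp (-(t-x)^2/2))
        (Ioi x) := by
      exact ((aux_gauss_integrable.comp_sub_right x).const_mul _).integrableOn
    calc ∫ t in Ioi x, Real.exp (-t^2/2)
        ≤ ∫ t in Ioi x, Real.exp (-x^2/2) * Real.exp (-(t-x)^2/2) := by
          apply setIntegral_mono_on aux_gauss_integrable.integrableOn hcomp measurableSet_Ioi
          intro t ht
          rw [← Real.exp_add, Real.exp_le_exp]
          nlinarith [mem_Ioi.mp ht]
      _ = Real.exp (-x^2/2) * (Real.sqrt (2*Real.pi) / 2) := by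
          rw [integral_const_mul, aux_shift_Ioi (fun s => Real.exp (-s^2/2)) x, aux_gauss_half]
  calc (Real.sqrt (2*Real.pi))⁻¹ * ∫ t in Ioi x, Real.exp (-t^2/2)
      ≤ (Real.sqrt (2*Real.pi))⁻¹ * (Real.exp (-x^2/2) * (Real.sqrt (2*Real.pi) / 2)) := by
        apply mul_le_mul_of_nonneg_left hbound (by positivity)
    _ = Real.exp (-x^2/2) / 2 := by field_simp

lemma aux_gaussLin_eq (σ lam : ℝ) (hσ : 0 < σ) (t : ℝ) :
    Real.exp (lam*t - t^2/(8*σ^2))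
      = Real.exp (2*lam^2*σ^2) * Real.exp (-(8*σ^2)⁻¹ * (t - 4*lam*σ^2)^2) := by
  rw [← Real.exp_add, Real.exp_eq_exp]
  have h8 : (8:ℝ)*σ^2 ≠ 0 := by positivity
  field_simp
  ring

lemma aux_gaussLin_integrable (σ lam : ℝ) (hσ : 0 < σ) :
    Integrable (fun t : ℝ => Real.exp (lam*t - t^2/(8*σ^2))) := by
  simp_rw [aux_gaussLin_eq σ lam hσ]
  exact ((integrable_exp_neg_mul_sq (by positivity : (0:ℝ) < (8*σ^2)⁻¹)).comp_sub_right
    (4*lam*σ^2)).const_mul _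

lemma aux_gaussLin_int (σ lam : ℝ) (hσ : 0 < σ) :
    ∫ t : ℝ, Real.exp (lam*t - t^2/(8*σ^2))
      = 2*σ*Real.sqrt (2*Real.pi) * Real.exp (2*lam^2*σ^2) := by
  simp_rw [aux_gaussLin_eq σ lam hσ]
  rw [integral_const_mul,
    integral_sub_right_eq_self (fun u => Real.exp (-(8*σ^2)⁻¹ * u^2)) (4*lam*σ^2),
    integral_gaussian]
  have h1 : Real.pi / (8*σ^2)⁻¹ = (2*σ)^2 * (2*Real.pi) := by
    field_simp; ring
  rw [h1, Real.sqrt_mul (sq_nonneg _), Real.sqrt_sq (by positivity)]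
  ring

lemma aux_expInt (lam r₀ : ℝ) (hlam : 0 < lam) (hr₀ : 0 ≤ r₀) :
    ∫ t in Ioc (0:ℝ) r₀, lam * Real.exp (lam * t) = Real.exp (lam * r₀) - 1 := by
  rw [← intervalIntegral.integral_of_le hr₀, intervalIntegral.integral_const_mul,
    intervalIntegral.integral_comp_mul_left (fun u => Real.exp u) hlam.ne',
    integral_exp]
  simp [smul_eq_mul]
  field_simp

end Aux

open Set

/-- exponential moment bound from a Gaussian-type tail estimate
(simplified form). -/
theorem exp_moment_bound_of_gaussian_tail'
    (Ω : Type*) [MeasurableSpace Ω] (P : Measure Ω) [IsProbabilityMeasure P]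
    (N : Ω → ℝ) (hNmeas : Measurable N) (hNnonneg : ∀ ω, 0 ≤ N ω)
    (σ lam r₀ α : ℝ) (hσ : 0 < σ) (hlam : 0 < lam) (hr₀ : 0 ≤ r₀) (hα : 0 ≤ α)
    (htail : ∀ r : ℝ, r₀ ≤ r →
      (P {ω | r < N ω}).toReal ≤ 1 - stdNormalCDF (α + r / (2 * σ))) :
    ∫ ω, Real.exp (lam * N ω) ∂P
      ≤ Real.exp (lam * r₀)
        + Real.sqrt (2 * Real.pi) * σ * lam * Real.exp (2 * lam^2 * σ^2) := by
  classical
  set g : ℝ → ℝ := fun t => lam * Real.exp (lam * t) with hg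
  set B : ℝ := Real.sqrt (2 * Real.pi) * σ * lam * Real.exp (2 * lam^2 * σ^2) with hB
  set h : ℝ → ℝ := fun t => (lam/2) * Real.exp (lam*t - t^2/(8*σ^2)) with hh
  have hgc : Continuous g := by fun_prop
  -- layer cake
  have hlc := lintegral_comp_eq_lintegral_meas_lt_mul P (f := N) (g := g)
    (Filter.Eventually.of_forall hNnonneg) hNmeas.aemeasurable
    (fun t _ => hgc.intervalIntegrable 0 t)
    (Filter.Eventually.of_forall fun t => by positivity)
  have hG : ∀ y : ℝ, ∫ t in (0:ℝ)..y, g t = Real.exp (lam * y) - 1 := by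
    intro y
    rw [hg]
    rw [intervalIntegral.integral_const_mul,
      intervalIntegral.integral_comp_mul_left (fun u => Real.exp u) hlam.ne',
      integral_exp]
    simp [smul_eq_mul]
    field_simp
  simp_rw [hG] at hlc
  -- bound piece 1
  have hpiece1 : ∫⁻ t in Ioc (0:ℝ) r₀, P {a | t < N a} * ENNReal.ofReal (g t)
      ≤ ENNReal.ofReal (Real.exp (lam * r₀) - 1) := by
    calc ∫⁻ t in Ioc (0:ℝ) r₀, P {a | t < N a} * ENNReal.ofReal (g t)
        ≤ ∫⁻ t in Ioc (0:ℝ) r₀, 1 * ENNReal.ofReal (g t) :=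
          lintegral_mono fun t => mul_le_mul_left prob_le_one _
      _ = ∫⁻ t in Ioc (0:ℝ) r₀, ENNReal.ofReal (g t) := by simp
      _ = ENNReal.ofReal (∫ t in Ioc (0:ℝ) r₀, g t) := by
          rw [← ofReal_integral_eq_lintegral_ofReal
            (hgc.integrableOn_Ioc)
            (Filter.Eventually.of_forall fun t => by positivity)]
      _ = ENNReal.ofReal (Real.exp (lam * r₀) - 1) := by
          rw [hg, aux_expInt lam r₀ hlam hr₀]
  -- bound piece 2
  have hhint : Integrable h := (aux_gaussLin_integrable σ lam hσ).const_mul _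
  have hhnn : ∀ t, 0 ≤ h t := fun t => by rw [hh]; positivity
  have hpt : ∀ t ∈ Ioi r₀, P {a | t < N a} * ENNReal.ofReal (g t) ≤ ENNReal.ofReal (h t) := by
    intro t ht
    have ht' : r₀ < t := mem_Ioi.mp ht
    have ht0 : 0 ≤ t := le_trans hr₀ ht'.le
    have hgt : 0 ≤ g t := by rw [hg]; positivity
    rw [← ENNReal.ofReal_toReal (measure_ne_top P _), ← ENNReal.ofReal_mul
      ENNReal.toReal_nonneg]
    apply ENNReal.ofReal_le_ofReal
    have hx : 0 ≤ α + t / (2*σ) := by positivity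
    have hmill := aux_mill (α + t / (2*σ)) hx
    have htail' := htail t ht'.le
    have hcmp : Real.exp (-(α + t / (2*σ))^2/2) ≤ Real.exp (-t^2/(8*σ^2)) := by
      rw [Real.exp_le_exp]
      have hd : 0 ≤ t/(2*σ) := by positivity
      have h1 : (t/(2*σ))^2/2 = t^2/(8*σ^2) := by
        rw [div_pow, div_div]
        congr 1
        ring
      have h2 : (t/(2*σ))^2 ≤ (α + t/(2*σ))^2 := by nlinarith
      have key : t^2/(8*σ^2) ≤ (α + t/(2*σ))^2/2 := by linarith
      rw [neg_div, neg_div]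
      exact neg_le_neg key
    calc (P {a | t < N a}).toReal * g t
        ≤ (1 - stdNormalCDF (α + t / (2*σ))) * g t := by
          apply mul_le_mul_of_nonneg_right htail' hgt
      _ ≤ (Real.exp (-(α + t / (2*σ))^2/2) / 2) * g t := by
          apply mul_le_mul_of_nonneg_right hmill hgt
      _ ≤ (Real.exp (-t^2/(8*σ^2)) / 2) * g t := by
          apply mul_le_mul_of_nonneg_right (by linarith) hgt
      _ = h t := by
          simp only [hh, hg]
          have hee : Real.exp (lam*t - t^2/(8*σ^2))
              = Real.exp (-t^2/(8*σ^2)) * Real.exp (lam*t) := by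
            rw [← Real.exp_add]; ring_nf
          rw [hee]; ring
  have hpiece2 : ∫⁻ t in Ioi r₀, P {a | t < N a} * ENNReal.ofReal (g t)
      ≤ ENNReal.ofReal B := by
    calc ∫⁻ t in Ioi r₀, P {a | t < N a} * ENNReal.ofReal (g t)
        ≤ ∫⁻ t in Ioi r₀, ENNReal.ofReal (h t) := by
          apply setLIntegral_mono' measurableSet_Ioi hpt
      _ = ENNReal.ofReal (∫ t in Ioi r₀, h t) := by
          rw [← ofReal_integral_eq_lintegral_ofReal hhint.integrableOn
            (Filter.Eventually.of_forall fun t => hhnn t)]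
      _ ≤ ENNReal.ofReal (∫ t, h t) := by
          apply ENNReal.ofReal_le_ofReal
          exact setIntegral_le_integral hhint (Filter.Eventually.of_forall hhnn)
      _ = ENNReal.ofReal B := by
          simp only [hh, hB]
          rw [integral_const_mul, aux_gaussLin_int σ lam hσ]
          congr 1
          ring
  -- assemble
  have hsplit : ∫⁻ t in Ioi (0:ℝ), P {a | t < N a} * ENNReal.ofReal (g t)
      = (∫⁻ t in Ioc (0:ℝ) r₀, P {a | t < N a} * ENNReal.ofReal (g t))
        + ∫⁻ t in Ioi r₀, P {a | t < N a} * ENNReal.ofReal (g t) := by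
    rw [← Ioc_union_Ioi_eq_Ioi hr₀]
    exact lintegral_union measurableSet_Ioi (Ioc_disjoint_Ioi le_rfl)
  have hmain : ∫⁻ ω, ENNReal.ofReal (Real.exp (lam * N ω)) ∂P
      ≤ ENNReal.ofReal (Real.exp (lam * r₀) + B) := by
    have hplus : ∀ ω, ENNReal.ofReal (Real.exp (lam * N ω))
        = ENNReal.ofReal (Real.exp (lam * N ω) - 1) + 1 := by
      intro ω
      have h1 : (1:ℝ) ≤ Real.exp (lam * N ω) := by
        rw [← Real.exp_zero]
        exact Real.exp_le_exp.mpr (mul_nonneg hlam.le (hNnonneg ω))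
      rw [← ENNReal.ofReal_one, ← ENNReal.ofReal_add (by linarith) zero_le_one]
      norm_num
    calc ∫⁻ ω, ENNReal.ofReal (Real.exp (lam * N ω)) ∂P
        = (∫⁻ ω, ENNReal.ofReal (Real.exp (lam * N ω) - 1) ∂P) + 1 := by
          simp_rw [hplus]
          rw [lintegral_add_right _ measurable_const, lintegral_const, one_mul,
            measure_univ]
      _ = (∫⁻ t in Ioi (0:ℝ), P {a | t < N a} * ENNReal.ofReal (g t)) + 1 := by rw [hlc]
      _ ≤ (ENNReal.ofReal (Real.exp (lam * r₀) - 1) + ENNReal.ofReal B) + 1 := by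
          rw [hsplit]
          exact add_le_add_left (add_le_add hpiece1 hpiece2) 1
      _ = ENNReal.ofReal (Real.exp (lam * r₀) + B) := by
          have h1 : (1:ℝ) ≤ Real.exp (lam * r₀) := by
            rw [← Real.exp_zero]; exact Real.exp_le_exp.mpr (by positivity)
          have hBnn : (0:ℝ) ≤ B := by rw [hB]; positivity
          rw [← ENNReal.ofReal_one, ← ENNReal.ofReal_add (by linarith) hBnn,
            ← ENNReal.ofReal_add (by linarith) zero_le_one]
          congr 1
          ring
  have hnn : 0 ≤ᵐ[P] fun ω => Real.exp (lam * N ω) :=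
    Filter.Eventually.of_forall fun ω => (Real.exp_pos _).le
  have hsm : AEStronglyMeasurable (fun ω => Real.exp (lam * N ω)) P :=
    (Real.measurable_exp.comp (hNmeas.const_mul lam)).aestronglyMeasurable
  rw [integral_eq_lintegral_of_nonneg_ae hnn hsm]
  have hBnn : 0 ≤ B := by rw [hB]; positivity
  calc (∫⁻ ω, ENNReal.ofReal (Real.exp (lam * N ω)) ∂P).toReal
      ≤ (ENNReal.ofReal (Real.exp (lam * r₀) + B)).toReal :=
        ENNReal.toReal_mono ENNReal.ofReal_ne_top hmain
    _ = Real.exp (lam * r₀) + B := ENNReal.toReal_ofReal (by positivity)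
end

section
/- Let A₁,…,A_d be real n×n matrices satisfying the step-2 nilpotency condition [[A_i, A_j], A_l] = 0 for all i, j, l ∈ {1,…,d}, where [A,B] := AB − BA. Let Z = (Z¹,…,Z^d) : [0,T] → ℝ^d be continuously differentiable, fix 0 ≤ t ≤ T and x ∈ ℝⁿ, and let X : [t,T] → ℝⁿ be a solution of the linear ODE dX_r/dr = Σ_{i=1}^{d} A_i X_r (dZ^i_r/dr) with X_t = x. For 1 ≤ i ≠ j ≤ d define the area a^{ij}_{t,r} := ½ ∫_t^r (Z^i_s − Z^i_t)·(dZ^j_s/ds) ds − ½ ∫_t^r (Z^j_s − Z^j_t)·(dZ^i_s/ds) ds. Then for all r ∈ [t,T]: X_r = exp( Σ_{i=1}^{d} A_i (Z^i_r − Z^i_t) − Σ_{1 ≤ i < j ≤ d} [A_i, A_j]·a^{ij}_{t,r} ) · x, where exp is the matrix exponential. -/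
open scoped Matrix
open intervalIntegral

open Finset
set_option linter.unusedSectionVars false
set_option maxHeartbeats 1000000

private def shift1 {α : Type*} [Zero α] (f : ℕ → α) : ℕ → α
  | 0 => 0
  | (m+1) => f m

private lemma shift1_zero {α : Type*} [Zero α] (f : ℕ → α) : shift1 f 0 = 0 := rfl
private lemma shift1_succ {α : Type*} [Zero α] (f : ℕ → α) (m : ℕ) :
    shift1 f (m + 1) = f m := rfl

private lemma summable_shift1 {α : Type*} [AddCommGroup α] [TopologicalSpace α]
    [IsTopologicalAddGroup α] (f : ℕ → α) (hf : Summable f) : Summable (shift1 f) :=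
  (summable_nat_add_iff 1).mp (by simpa [shift1_succ] using hf)

private lemma tsum_shift1 {α : Type*} [AddCommGroup α] [TopologicalSpace α]
    [IsTopologicalAddGroup α] [T2Space α] (f : ℕ → α) (hf : Summable f) :
    ∑' k, shift1 f k = ∑' m, f m := by
  rw [Summable.tsum_eq_zero_add (summable_shift1 f hf)]
  simp [shift1_zero, shift1_succ]

section KeyLemma
variable {𝔸 : Type*} [NormedRing 𝔸] [NormedAlgebra ℝ 𝔸] [CompleteSpace 𝔸]

private lemma gauss_sum (m : ℕ) : ∑ i ∈ range m, ((i : ℝ) + 1) = m * (m + 1) / 2 := by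
  induction m with
  | zero => simp
  | succ m ih => rw [Finset.sum_range_succ, ih]; push_cast; ring

private lemma pow_bracket_comm (P Q C : 𝔸) (hC : C = P * Q - Q * P) (hc : P * C = C * P) :
    ∀ j : ℕ, P ^ (j + 1) * Q = Q * P ^ (j + 1) + ((j : ℝ) + 1) • (C * P ^ j) := by
  intro j
  induction j with
  | zero => simp [hC]
  | succ j ih =>
    have h1 : P ^ (j + 2) * Q = P * (P ^ (j + 1) * Q) := by
      rw [← mul_assoc, ← pow_succ']
    have h2 : P * Q = Q * P + C := by rw [hC]; noncomm_ring
    rw [h1, ih, mul_add, mul_smul_comm, ← mul_assoc, ← mul_assoc, hc,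
      mul_assoc C, ← pow_succ', h2, add_mul, mul_assoc, ← pow_succ']
    push_cast
    module

private lemma sum_pow_bracket (P Q C : 𝔸) (hC : C = P * Q - Q * P) (hc : P * C = C * P)
    (m : ℕ) :
    ∑ i ∈ range (m + 2), P ^ i * Q * P ^ (m + 1 - i)
      = ((m : ℝ) + 2) • (Q * P ^ (m + 1)) + (((m : ℝ) + 1) * ((m : ℝ) + 2) / 2) • (C * P ^ m) := by
  rw [Finset.sum_range_succ']
  have hterm : ∀ i ∈ range (m + 1),
      P ^ (i + 1) * Q * P ^ (m + 1 - (i + 1))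
        = Q * P ^ (m + 1) + ((i : ℝ) + 1) • (C * P ^ m) := by
    intro i hi
    have hi' : i ≤ m := by simpa [Nat.lt_succ_iff] using hi
    have h1 : m + 1 - (i + 1) = m - i := by omega
    rw [h1, pow_bracket_comm P Q C hC hc i, add_mul, smul_mul_assoc,
      mul_assoc, ← pow_add, mul_assoc C, ← pow_add]
    have e1 : i + 1 + (m - i) = m + 1 := by omega
    have e2 : i + (m - i) = m := by omega
    rw [e1, e2]
  rw [Finset.sum_congr rfl hterm, Finset.sum_add_distrib, Finset.sum_const, ← Finset.sum_smul,
    gauss_sum]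
  simp only [pow_zero, one_mul, Nat.sub_zero, card_range, ← Nat.cast_smul_eq_nsmul ℝ]
  push_cast
  module

private lemma norm_pow_le_of_norm_one_le (h1 : ‖(1 : 𝔸)‖ ≤ 1) (a : 𝔸) {R : ℝ}
    (hR : ‖a‖ ≤ R) (hR0 : 0 ≤ R) : ∀ k : ℕ, ‖a ^ k‖ ≤ R ^ k := by
  intro k
  induction k with
  | zero => simpa using h1
  | succ k ih =>
    rw [pow_succ, pow_succ]
    exact le_trans (norm_mul_le _ _) (mul_le_mul ih hR (norm_nonneg _) (pow_nonneg hR0 _))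

private lemma hasDerivAt_pow_comp (M M' : ℝ → 𝔸) (hM : ∀ s, HasDerivAt M (M' s) s)
    (k : ℕ) (y : ℝ) :
    HasDerivAt (fun z => M z ^ k)
      (∑ i ∈ range k, M y ^ i * M' y * M y ^ (k - 1 - i)) y := by
  induction k with
  | zero => simpa using hasDerivAt_const y (1 : 𝔸)
  | succ k ih =>
    have h : HasDerivAt (fun z => M z ^ k * M z)
        ((∑ i ∈ range k, M y ^ i * M' y * M y ^ (k - 1 - i)) * M y + M y ^ k * M' y) y :=
      ih.mul (hM y)
    have hfun : (fun z => M z ^ k * M z) = fun z => M z ^ (k + 1) := by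
      funext z; rw [← pow_succ]
    rw [hfun] at h
    have hsum : (∑ i ∈ range k, M y ^ i * M' y * M y ^ (k - 1 - i)) * M y + M y ^ k * M' y
        = ∑ i ∈ range (k + 1), M y ^ i * M' y * M y ^ (k + 1 - 1 - i) := by
      rw [Finset.sum_range_succ, Finset.sum_mul]
      congr 1
      · refine Finset.sum_congr rfl fun i hi => ?_
        have hik : i < k := Finset.mem_range.mp hi
        have he : k - 1 - i + 1 = k + 1 - 1 - i := by omega
        rw [mul_assoc, ← pow_succ, he]
      · simp
    rw [hsum] at h
    exact h

theorem hasDerivAt_exp_central (h1 : ‖(1 : 𝔸)‖ ≤ 1) (M M' : ℝ → 𝔸)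
    (hM : ∀ s, HasDerivAt M (M' s) s) (hM'c : Continuous M') (r : ℝ)
    (hc : M r * (M r * M' r - M' r * M r) = (M r * M' r - M' r * M r) * M r) :
    HasDerivAt (fun s => NormedSpace.exp (M s))
      ((M' r + (2⁻¹ : ℝ) • (M r * M' r - M' r * M r)) * NormedSpace.exp (M r)) r := by
  have hMc : Continuous M := by
    rw [continuous_iff_continuousAt]; exact fun s => (hM s).continuousAt
  obtain ⟨R0, hR0⟩ := (isCompact_closedBall r 1).exists_bound_of_continuousOn hMc.continuousOn
  obtain ⟨R1, hR1⟩ := (isCompact_closedBall r 1).exists_bound_of_continuousOn hM'c.continuousOn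
  set R : ℝ := max R0 0 with hRdef
  set R' : ℝ := max R1 0 with hR'def
  have hRnn : 0 ≤ R := le_max_right _ _
  have hR'nn : 0 ≤ R' := le_max_right _ _
  have hMb : ∀ y ∈ Metric.ball r 1, ‖M y‖ ≤ R :=
    fun y hy => le_trans (hR0 y (Metric.ball_subset_closedBall hy)) (le_max_left _ _)
  have hM'b : ∀ y ∈ Metric.ball r 1, ‖M' y‖ ≤ R' :=
    fun y hy => le_trans (hR1 y (Metric.ball_subset_closedBall hy)) (le_max_left _ _)
  set g : ℕ → ℝ → 𝔸 := fun k z => ((k.factorial : ℝ))⁻¹ • M z ^ k with hgdef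
  set g' : ℕ → ℝ → 𝔸 := fun k z =>
    ((k.factorial : ℝ))⁻¹ • ∑ i ∈ range k, M z ^ i * M' z * M z ^ (k - 1 - i) with hg'def
  set u : ℕ → ℝ := shift1 (fun m => R' * (R ^ m / m.factorial)) with hudef
  have hu : Summable u :=
    summable_shift1 _ ((Real.summable_pow_div_factorial R).mul_left R')
  have hg : ∀ k, ∀ y ∈ Metric.ball r 1, HasDerivAt (g k) (g' k y) y := by
    intro k y _
    exact (hasDerivAt_pow_comp M M' hM k y).const_smul ((k.factorial : ℝ))⁻¹
  have hg' : ∀ k, ∀ y ∈ Metric.ball r 1, ‖g' k y‖ ≤ u k := by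
    intro k y hy
    match k with
    | 0 => simp [hg'def, hudef, shift1_zero]
    | (m+1) =>
      have hterm : ∀ i ∈ range (m + 1), ‖M y ^ i * M' y * M y ^ (m + 1 - 1 - i)‖
          ≤ R ^ m * R' := by
        intro i hi
        have hi' : i ≤ m := by simpa [Nat.lt_succ_iff] using hi
        calc ‖M y ^ i * M' y * M y ^ (m + 1 - 1 - i)‖
            ≤ ‖M y ^ i‖ * ‖M' y‖ * ‖M y ^ (m + 1 - 1 - i)‖ :=
              le_trans (norm_mul_le _ _)
                (mul_le_mul_of_nonneg_right (norm_mul_le _ _) (norm_nonneg _))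
          _ ≤ R ^ i * R' * R ^ (m - i) := by
              have e : m + 1 - 1 - i = m - i := by omega
              rw [e]
              exact mul_le_mul
                (mul_le_mul (norm_pow_le_of_norm_one_le h1 _ (hMb y hy) hRnn i)
                  (hM'b y hy) (norm_nonneg _) (pow_nonneg hRnn _))
                (norm_pow_le_of_norm_one_le h1 _ (hMb y hy) hRnn _) (norm_nonneg _)
                (mul_nonneg (pow_nonneg hRnn _) hR'nn)
          _ = R ^ m * R' := by rw [mul_right_comm, ← pow_add]; congr 2; omega
      calc ‖g' (m+1) y‖
          ≤ (((m+1).factorial : ℝ))⁻¹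
            * ∑ i ∈ range (m+1), ‖M y ^ i * M' y * M y ^ (m + 1 - 1 - i)‖ := by
            rw [hg'def]
            simp only [norm_smul, norm_inv, Real.norm_natCast]
            exact mul_le_mul_of_nonneg_left (norm_sum_le _ _) (by positivity)
        _ ≤ (((m+1).factorial : ℝ))⁻¹ * ((m+1) * (R ^ m * R')) := by
            refine mul_le_mul_of_nonneg_left ?_ (by positivity)
            calc ∑ i ∈ range (m+1), ‖M y ^ i * M' y * M y ^ (m + 1 - 1 - i)‖
                ≤ ∑ _i ∈ range (m+1), R ^ m * R' := Finset.sum_le_sum hterm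
              _ = (m+1) * (R ^ m * R') := by
                  rw [Finset.sum_const, card_range, nsmul_eq_mul]; push_cast; ring
        _ = u (m+1) := by
            rw [hudef, shift1_succ, Nat.factorial_succ]
            push_cast
            have hm1 : ((m:ℝ)+1) ≠ 0 := by positivity
            have h2 : (m.factorial : ℝ) ≠ 0 := by positivity
            field_simp
  have hg0 : Summable fun k => g k r := NormedSpace.expSeries_summable' (𝕂 := ℝ) (M r)
  have hball : r ∈ Metric.ball r 1 := Metric.mem_ball_self one_pos
  have hder := hasDerivAt_tsum_of_isPreconnected hu Metric.isOpen_ball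
    (convex_ball r 1).isPreconnected hg hg' hball hg0 hball
  have hfun : (fun z => ∑' k, g k z) = fun s => NormedSpace.exp (M s) := by
    funext z
    rw [NormedSpace.exp_eq_tsum ℝ]
  rw [hfun] at hder
  -- identify the derivative value
  set P := M r with hP
  set Q := M' r with hQ
  set C : 𝔸 := P * Q - Q * P with hCdef
  set tA : ℕ → 𝔸 := shift1 (fun m => Q * (((m.factorial : ℝ))⁻¹ • P ^ m)) with htA
  set tB : ℕ → 𝔸 := shift1 (shift1 (fun m =>
    ((2⁻¹ : ℝ) • C) * (((m.factorial : ℝ))⁻¹ • P ^ m))) with htB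
  have hexpsum : Summable (fun m => ((m.factorial : ℝ))⁻¹ • P ^ m) :=
    NormedSpace.expSeries_summable' (𝕂 := ℝ) P
  have hsplit : ∀ k, g' k r = tA k + tB k := by
    intro k
    match k with
    | 0 => simp [hg'def, htA, htB, shift1_zero]
    | 1 =>
      rw [hg'def]
      simp only [htA, htB, shift1_succ, shift1_zero]
      simp
      rfl
    | (m+2) =>
      rw [hg'def]
      simp only []
      have he : ∀ i, m + 2 - 1 - i = m + 1 - i := by intro i; omega
      have hss : ∑ i ∈ range (m + 2), M r ^ i * M' r * M r ^ (m + 2 - 1 - i)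
          = ∑ i ∈ range (m + 2), P ^ i * Q * P ^ (m + 1 - i) :=
        Finset.sum_congr rfl fun i _ => by rw [he i, ← hP, ← hQ]
      rw [hss, sum_pow_bracket P Q C hCdef hc m, smul_add, smul_smul, smul_smul]
      have f1 : ((m+2).factorial : ℝ)⁻¹ * ((m:ℝ) + 2) = (((m+1).factorial : ℝ))⁻¹ := by
        rw [Nat.factorial_succ (m+1)]
        push_cast
        have h2 : ((m+1).factorial : ℝ) ≠ 0 := by positivity
        field_simp
        ring
      have f2 : ((m+2).factorial : ℝ)⁻¹ * (((m:ℝ) + 1) * ((m:ℝ) + 2) / 2)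
          = 2⁻¹ * ((m.factorial : ℝ))⁻¹ := by
        rw [Nat.factorial_succ (m+1), Nat.factorial_succ m]
        push_cast
        have h2 : (m.factorial : ℝ) ≠ 0 := by positivity
        field_simp
        ring
      rw [f1, f2, htA, htB, shift1_succ, shift1_succ]
      congr 1
      · rw [mul_smul_comm]
      · rw [mul_smul, shift1_succ, smul_mul_assoc, mul_smul_comm]
  have hSA : Summable tA := summable_shift1 _ (hexpsum.mul_left Q)
  have hSB : Summable tB :=
    summable_shift1 _ (summable_shift1 _ (hexpsum.mul_left _))
  have htsum : ∑' k, g' k r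
      = (M' r + (2⁻¹ : ℝ) • (M r * M' r - M' r * M r)) * NormedSpace.exp (M r) := by
    calc ∑' k, g' k r = ∑' k, (tA k + tB k) := tsum_congr hsplit
      _ = (∑' k, tA k) + (∑' k, tB k) := Summable.tsum_add hSA hSB
      _ = Q * NormedSpace.exp P + ((2⁻¹ : ℝ) • C) * NormedSpace.exp P := by
          congr 1
          · rw [htA, tsum_shift1 _ (hexpsum.mul_left Q), Summable.tsum_mul_left _ hexpsum,
              NormedSpace.exp_eq_tsum ℝ]
          · rw [htB, tsum_shift1 _ (summable_shift1 _ (hexpsum.mul_left _)),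
              tsum_shift1 _ (hexpsum.mul_left _), Summable.tsum_mul_left _ hexpsum,
              NormedSpace.exp_eq_tsum ℝ]
      _ = (M' r + (2⁻¹ : ℝ) • (M r * M' r - M' r * M r)) * NormedSpace.exp (M r) := by
          rw [add_mul, ← hP, ← hQ, ← hCdef]
  rw [htsum] at hder
  exact hder

end KeyLemma

section Nilpotent
variable {𝔸 : Type*} [Ring 𝔸] [Algebra ℝ 𝔸] {d : ℕ}

variable {B : Fin d → 𝔸}

private def Nil (B : Fin d → 𝔸) : Prop :=
  ∀ i j l : Fin d, (B i * B j - B j * B i) * B l - B l * (B i * B j - B j * B i) = 0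

private lemma comm_KA (hnil : Nil B) (i j l : Fin d) : Commute (B i * B j - B j * B i) (B l) :=
  sub_eq_zero.mp (hnil i j l)

private lemma comm_KK (hnil : Nil B) (i j k l : Fin d) :
    Commute (B i * B j - B j * B i) (B k * B l - B l * B k) :=
  ((comm_KA hnil i j k).mul_right (comm_KA hnil i j l)).sub_right
    ((comm_KA hnil i j l).mul_right (comm_KA hnil i j k))

/-- central sums: `∑ i j, w i j • [B i, B j]` commute with every `B l`. -/
private lemma cenSum_comm_A (hnil : Nil B) (w : Fin d → Fin d → ℝ) (l : Fin d) :
    Commute (∑ i, ∑ j, w i j • (B i * B j - B j * B i)) (B l) :=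
  Commute.sum_left _ _ _ fun i _ =>
    Commute.sum_left _ _ _ fun j _ => (comm_KA hnil i j l).smul_left _

private lemma cenSum_comm_lin (hnil : Nil B) (w : Fin d → Fin d → ℝ) (a : Fin d → ℝ) :
    Commute (∑ i, ∑ j, w i j • (B i * B j - B j * B i)) (∑ l, a l • B l) :=
  Commute.sum_right _ _ _ fun l _ => (cenSum_comm_A hnil w l).smul_right _

private lemma cenSum_comm_cenSum (hnil : Nil B) (w v : Fin d → Fin d → ℝ) :
    Commute (∑ i, ∑ j, w i j • (B i * B j - B j * B i))
      (∑ i, ∑ j, v i j • (B i * B j - B j * B i)) :=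
  Commute.sum_right _ _ _ fun k _ => Commute.sum_right _ _ _ fun l _ =>
    Commute.smul_right (Commute.sum_left _ _ _ fun i _ => Commute.sum_left _ _ _ fun j _ =>
      ((comm_KK hnil i j k l).smul_left _)) _

private lemma lin_mul_lin (a b : Fin d → ℝ) :
    (∑ i, a i • B i) * (∑ j, b j • B j) = ∑ i, ∑ j, (a i * b j) • (B i * B j) := by
  rw [Finset.sum_mul]
  refine Finset.sum_congr rfl fun i _ => ?_
  rw [Finset.mul_sum]
  refine Finset.sum_congr rfl fun j _ => ?_
  rw [smul_mul_assoc, mul_smul_comm, smul_smul]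

private lemma bracket_lin_lin (a b : Fin d → ℝ) :
    (∑ i, a i • B i) * (∑ j, b j • B j) - (∑ j, b j • B j) * (∑ i, a i • B i)
      = ∑ i, ∑ j, (a i * b j) • (B i * B j - B j * B i) := by
  rw [lin_mul_lin, lin_mul_lin]
  have h2 : ∑ i, ∑ j, (b i * a j) • (B i * B j) = ∑ i, ∑ j, (a i * b j) • (B j * B i) := by
    rw [Finset.sum_comm]
    exact Finset.sum_congr rfl fun i _ => Finset.sum_congr rfl fun j _ => by rw [mul_comm]
  rw [h2, ← Finset.sum_sub_distrib]
  refine Finset.sum_congr rfl fun i _ => ?_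
  rw [← Finset.sum_sub_distrib]
  refine Finset.sum_congr rfl fun j _ => ?_
  rw [← smul_sub]

private lemma antisym_reduce (a b : Fin d → ℝ) :
    ∑ i, ∑ j, (a i * b j) • (B i * B j - B j * B i)
      = ∑ i, ∑ j, (if i < j then (a i * b j - a j * b i) • (B i * B j - B j * B i) else 0) := by
  have hK : ∀ i : Fin d, B i * B i - B i * B i = (0 : 𝔸) := fun i => sub_self _
  have step1 : ∑ i, ∑ j, (a i * b j) • (B i * B j - B j * B i)
      = (∑ i, ∑ j, (if i < j then (a i * b j) • (B i * B j - B j * B i) else 0))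
        + (∑ i, ∑ j, (if j < i then (a i * b j) • (B i * B j - B j * B i) else 0)) := by
    rw [← Finset.sum_add_distrib]
    refine Finset.sum_congr rfl fun i _ => ?_
    rw [← Finset.sum_add_distrib]
    refine Finset.sum_congr rfl fun j _ => ?_
    rcases lt_trichotomy i j with h | h | h
    · rw [if_pos h, if_neg (asymm h), add_zero]
    · subst h
      simp [hK]
    · rw [if_neg (asymm h), if_pos h, zero_add]
  have step2 : (∑ i, ∑ j, (if j < i then (a i * b j) • (B i * B j - B j * B i) else 0))
      = ∑ i, ∑ j, (if i < j then (-(a j * b i)) • (B i * B j - B j * B i) else 0) := by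
    rw [Finset.sum_comm]
    refine Finset.sum_congr rfl fun i _ => Finset.sum_congr rfl fun j _ => ?_
    by_cases h : i < j
    · rw [if_pos h, if_pos h]
      rw [show B j * B i - B i * B j = -(B i * B j - B j * B i) from (neg_sub _ _).symm, smul_neg, ← neg_smul]
    · rw [if_neg h, if_neg h]
  rw [step1, step2, ← Finset.sum_add_distrib]
  refine Finset.sum_congr rfl fun i _ => ?_
  rw [← Finset.sum_add_distrib]
  refine Finset.sum_congr rfl fun j _ => ?_
  by_cases h : i < j
  · rw [if_pos h, if_pos h, if_pos h, ← add_smul, ← sub_eq_add_neg]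
  · rw [if_neg h, if_neg h, if_neg h, add_zero]

/-- the bracket of two "linear + central" elements equals the bracket of linear parts. -/
private lemma bracket_eq (hnil : Nil B) (a b : Fin d → ℝ) (w v : Fin d → Fin d → ℝ) :
    ((∑ i, a i • B i) - ∑ i, ∑ j, w i j • (B i * B j - B j * B i))
        * ((∑ i, b i • B i) - ∑ i, ∑ j, v i j • (B i * B j - B j * B i))
      - ((∑ i, b i • B i) - ∑ i, ∑ j, v i j • (B i * B j - B j * B i))
        * ((∑ i, a i • B i) - ∑ i, ∑ j, w i j • (B i * B j - B j * B i))
      = ∑ i, ∑ j, (a i * b j) • (B i * B j - B j * B i) := by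
  have h1 := (cenSum_comm_lin hnil v a).eq
  have h2 := (cenSum_comm_lin hnil w b).eq
  have h3 := (cenSum_comm_cenSum hnil w v).eq
  rw [← bracket_lin_lin (B := B) a b]
  
  set la := ∑ i, a i • B i
  set lb := ∑ i, b i • B i
  set Cw := ∑ i, ∑ j, w i j • (B i * B j - B j * B i)
  set Cv := ∑ i, ∑ j, v i j • (B i * B j - B j * B i)
  rw [sub_mul, mul_sub, mul_sub, sub_mul, mul_sub, mul_sub]
  rw [← h1, ← h2, h3]
  abel

end Nilpotent

section Transport
variable (n : ℕ)

/-- matrices acting on `Fin n → ℝ` as continuous linear maps, as an algebra equivalence. -/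
noncomputable def psiE : Matrix (Fin n) (Fin n) ℝ ≃ₐ[ℝ] ((Fin n → ℝ) →L[ℝ] (Fin n → ℝ)) :=
  AlgEquiv.ofLinearEquiv
    (Matrix.toLinAlgEquiv'.toLinearEquiv ≪≫ₗ LinearMap.toContinuousLinearMap)
    (by
      ext v
      simp [Matrix.toLinAlgEquiv'_apply])
    (by
      intro M N
      ext v
      simp [Matrix.toLinAlgEquiv'_apply, Matrix.mulVec_mulVec])

lemma psiE_apply (M : Matrix (Fin n) (Fin n) ℝ) (v : Fin n → ℝ) :
    psiE n M v = M.mulVec v := by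
  simp [psiE, Matrix.toLinAlgEquiv'_apply]

lemma psiE_continuous : Continuous (psiE n) :=
  (psiE n).toLinearMap.continuous_of_finiteDimensional

lemma psiE_symm_continuous : Continuous (psiE n).symm := by
  have : FiniteDimensional ℝ ((Fin n → ℝ) →L[ℝ] (Fin n → ℝ)) :=
    LinearEquiv.finiteDimensional (psiE n).toLinearEquiv
  exact (psiE n).symm.toLinearMap.continuous_of_finiteDimensional

lemma psiE_exp (N : Matrix (Fin n) (Fin n) ℝ) :
    psiE n (NormedSpace.exp N) = NormedSpace.exp (psiE n N) := by
  have hsb : Summable (fun k : ℕ => ((k.factorial : ℝ))⁻¹ • (psiE n N) ^ k) :=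
    NormedSpace.expSeries_summable' (𝕂 := ℝ) _
  have hsa : Summable (fun k : ℕ => ((k.factorial : ℝ))⁻¹ • N ^ k) := by
    have h := hsb.map ((psiE n).symm.toLinearMap.toAddMonoidHom) (psiE_symm_continuous n)
    have he : ⇑(psiE n).symm.toLinearMap.toAddMonoidHom ∘ (fun k : ℕ => ((k.factorial : ℝ))⁻¹ • (psiE n N) ^ k)
        = fun k : ℕ => ((k.factorial : ℝ))⁻¹ • N ^ k := by
      funext k
      simp [Function.comp, map_smul, map_pow]
    rwa [he] at h
  have hpsiC : ∃ ψc : Matrix (Fin n) (Fin n) ℝ →L[ℝ] ((Fin n → ℝ) →L[ℝ] (Fin n → ℝ)),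
      ⇑ψc = ⇑(psiE n) := by
    refine ⟨⟨(psiE n).toLinearMap, (psiE_continuous n)⟩, rfl⟩
  obtain ⟨ψc, hψc⟩ := hpsiC
  rw [NormedSpace.exp_eq_tsum ℝ, NormedSpace.exp_eq_tsum ℝ]
  calc psiE n (∑' k : ℕ, ((k.factorial : ℝ))⁻¹ • N ^ k)
      = ψc (∑' k : ℕ, ((k.factorial : ℝ))⁻¹ • N ^ k) := by rw [hψc]
    _ = ∑' k : ℕ, ψc (((k.factorial : ℝ))⁻¹ • N ^ k) := ψc.map_tsum hsa
    _ = ∑' k : ℕ, ((k.factorial : ℝ))⁻¹ • (psiE n N) ^ k := by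
        refine tsum_congr fun k => ?_
        rw [hψc, map_smul, map_pow]

end Transport


/-- Lemma `lem:linear-rde-solution-nilpotent` of the paper, smooth
case: explicit solution of a linear ODE with step-2 nilpotent coefficient matrices. -/
theorem linear_ode_solution_step2_nilpotent
    (n d : ℕ) (T t : ℝ) (ht : 0 ≤ t) (htT : t ≤ T)
    (A : Fin d → Matrix (Fin n) (Fin n) ℝ)
    -- step-2 nilpotency: [[A_i, A_j], A_l] = 0 for all i, j, l
    (hnil : ∀ i j l : Fin d,
      (A i * A j - A j * A i) * A l - A l * (A i * A j - A j * A i) = 0)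
    (Z : Fin d → ℝ → ℝ) (hZ : ∀ i, ContDiff ℝ 1 (Z i))
    (x : Fin n → ℝ) (X : ℝ → Fin n → ℝ)
    (hXt : X t = x)
    -- X solves dX_r = Σ_i A_i X_r dZ^i_r on [t, T]
    (hX : ∀ r ∈ Set.Icc t T,
      HasDerivAt X (∑ i, deriv (Z i) r • (A i).mulVec (X r)) r) :
    ∀ r ∈ Set.Icc t T,
      X r = (NormedSpace.exp
        (∑ i, (Z i r - Z i t) • A i
          - ∑ i, ∑ j, if i < j then
              ((1 / 2 : ℝ) * (∫ s in t..r, (Z i s - Z i t) * deriv (Z j) s)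
                - (1 / 2 : ℝ) * (∫ s in t..r, (Z j s - Z j t) * deriv (Z i) s))
              • (A i * A j - A j * A i)
            else 0)).mulVec x := by
  classical
  have hZc : ∀ i, Continuous (Z i) := fun i => (hZ i).continuous
  have hZdc : ∀ i, Continuous (deriv (Z i)) := fun i => (hZ i).continuous_deriv le_rfl
  have hZd : ∀ i r, HasDerivAt (Z i) (deriv (Z i) r) r := fun i r =>
    (((hZ i).differentiable one_ne_zero) r).hasDerivAt
  set Ab : Fin d → ((Fin n → ℝ) →L[ℝ] (Fin n → ℝ)) := fun i => psiE n (A i) with hAb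
  have hnilb : Nil Ab := by
    intro i j l
    have h := congrArg (psiE n) (hnil i j l)
    simpa using h
  set a : ℝ → Fin d → ℝ := fun r i => Z i r - Z i t with ha
  set q : ℝ → Fin d → ℝ := fun r i => deriv (Z i) r with hq
  set c : ℝ → Fin d → Fin d → ℝ := fun r i j =>
    (1 / 2 : ℝ) * (∫ s in t..r, (Z i s - Z i t) * deriv (Z j) s)
      - (1 / 2 : ℝ) * (∫ s in t..r, (Z j s - Z j t) * deriv (Z i) s) with hc
  set c' : ℝ → Fin d → Fin d → ℝ := fun r i j =>
    (1 / 2 : ℝ) * ((Z i r - Z i t) * deriv (Z j) r)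
      - (1 / 2 : ℝ) * ((Z j r - Z j t) * deriv (Z i) r) with hc'
  set Eb : ℝ → ((Fin n → ℝ) →L[ℝ] (Fin n → ℝ)) := fun r =>
    (∑ i, a r i • Ab i)
      - ∑ i, ∑ j, (if i < j then c r i j else 0) • (Ab i * Ab j - Ab j * Ab i) with hEb
  set Qb : ℝ → ((Fin n → ℝ) →L[ℝ] (Fin n → ℝ)) := fun r =>
    (∑ i, q r i • Ab i)
      - ∑ i, ∑ j, (if i < j then c' r i j else 0) • (Ab i * Ab j - Ab j * Ab i) with hQb
  set Lb : ℝ → ((Fin n → ℝ) →L[ℝ] (Fin n → ℝ)) := fun r => ∑ i, q r i • Ab i with hLb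
  -- derivative of Eb
  have hEderiv : ∀ r, HasDerivAt Eb (Qb r) r := by
    intro r
    rw [hEb, hQb]
    refine HasDerivAt.sub ?_ ?_
    · exact HasDerivAt.fun_sum fun i _ => ((hZd i r).sub_const (Z i t)).smul_const (Ab i)
    · refine HasDerivAt.fun_sum fun i _ => HasDerivAt.fun_sum fun j _ => ?_
      by_cases h : i < j
      · simp only [if_pos h]
        have hI1 : HasDerivAt (fun y => ∫ s in t..y, (Z i s - Z i t) * deriv (Z j) s)
            ((Z i r - Z i t) * deriv (Z j) r) r :=
          (Continuous.integral_hasStrictDerivAt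
            (((hZc i).sub continuous_const).mul (hZdc j)) t r).hasDerivAt
        have hI2 : HasDerivAt (fun y => ∫ s in t..y, (Z j s - Z j t) * deriv (Z i) s)
            ((Z j r - Z j t) * deriv (Z i) r) r :=
          (Continuous.integral_hasStrictDerivAt
            (((hZc j).sub continuous_const).mul (hZdc i)) t r).hasDerivAt
        exact ((hI1.const_mul (1 / 2 : ℝ)).sub (hI2.const_mul (1 / 2 : ℝ))).smul_const (Ab i * Ab j - Ab j * Ab i)
      · simp only [if_neg h, zero_smul]
        exact hasDerivAt_const _ _
  -- continuity of Qb
  have hQcont : Continuous Qb := by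
    rw [hQb]
    refine Continuous.sub ?_ ?_
    · exact continuous_finset_sum _ fun i _ => ((hZdc i).smul continuous_const)
    · refine continuous_finset_sum _ fun i _ => continuous_finset_sum _ fun j _ => ?_
      by_cases h : i < j
      · simp only [if_pos h]
        refine Continuous.fun_smul ?_ continuous_const
        exact (continuous_const.mul (((hZc i).sub continuous_const).mul (hZdc j))).sub
          (continuous_const.mul (((hZc j).sub continuous_const).mul (hZdc i)))
      · simp only [if_neg h, zero_smul]
        exact continuous_const
  -- bracket identities
  have hbr : ∀ r, Eb r * Qb r - Qb r * Eb r
      = ∑ i, ∑ j, (a r i * q r j) • (Ab i * Ab j - Ab j * Ab i) := by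
    intro r
    rw [hEb, hQb]
    exact bracket_eq hnilb (a r) (q r) _ _
  have hcomm : ∀ r, Eb r * (Eb r * Qb r - Qb r * Eb r)
      = (Eb r * Qb r - Qb r * Eb r) * Eb r := by
    intro r
    rw [hbr r]
    have h1 : Commute (∑ i, ∑ j, (a r i * q r j) • (Ab i * Ab j - Ab j * Ab i)) (Eb r) := by
      rw [hEb]
      exact (cenSum_comm_lin hnilb _ (a r)).sub_right (cenSum_comm_cenSum hnilb _ _)
    exact h1.symm.eq
  -- the magic cancellation
  have htotal : ∀ r, Qb r + (2⁻¹ : ℝ) • (Eb r * Qb r - Qb r * Eb r) = Lb r := by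
    intro r
    rw [hbr r, antisym_reduce (a r) (q r)]
    have hhalf : (2⁻¹ : ℝ) • (∑ i, ∑ j, (if i < j
          then (a r i * q r j - a r j * q r i) • (Ab i * Ab j - Ab j * Ab i) else 0))
        = ∑ i, ∑ j, (if i < j then c' r i j else 0) • (Ab i * Ab j - Ab j * Ab i) := by
      rw [Finset.smul_sum]
      refine Finset.sum_congr rfl fun i _ => ?_
      rw [Finset.smul_sum]
      refine Finset.sum_congr rfl fun j _ => ?_
      by_cases h : i < j
      · rw [if_pos h, if_pos h, smul_smul]
        congr 1
        rw [hc', ha, hq]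
        ring
      · rw [if_neg h, if_neg h, smul_zero, zero_smul]
    rw [hhalf]
    show ((∑ i, q r i • Ab i)
        - ∑ i, ∑ j, (if i < j then c' r i j else 0) • (Ab i * Ab j - Ab j * Ab i))
        + ∑ i, ∑ j, (if i < j then c' r i j else 0) • (Ab i * Ab j - Ab j * Ab i)
        = ∑ i, q r i • Ab i
    exact sub_add_cancel _ _
  -- derivative of the exponential
  have h1clm : ‖(1 : (Fin n → ℝ) →L[ℝ] (Fin n → ℝ))‖ ≤ 1 := by
    rw [ContinuousLinearMap.one_def]
    exact ContinuousLinearMap.norm_id_le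
  have hDexp : ∀ r, HasDerivAt (fun s => NormedSpace.exp (Eb s))
      (Lb r * NormedSpace.exp (Eb r)) r := by
    intro r
    have h := hasDerivAt_exp_central h1clm Eb Qb hEderiv hQcont r (hcomm r)
    rwa [htotal r] at h
  -- the candidate solution
  set Y : ℝ → (Fin n → ℝ) := fun r => NormedSpace.exp (Eb r) x with hY
  set evx : ((Fin n → ℝ) →L[ℝ] (Fin n → ℝ)) →L[ℝ] (Fin n → ℝ) :=
    ContinuousLinearMap.apply ℝ (Fin n → ℝ) x with hevx
  have hYderiv : ∀ r, HasDerivAt Y (Lb r (Y r)) r := by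
    intro r
    have h := (evx.hasFDerivAt (x := NormedSpace.exp (Eb r))).comp_hasDerivAt r (hDexp r)
    have he1 : (⇑evx ∘ fun s => NormedSpace.exp (Eb s)) = Y := by
      funext s
      simp [hY, hevx, Function.comp]
    have he2 : evx (Lb r * NormedSpace.exp (Eb r)) = Lb r (Y r) := by
      simp [hevx, hY, ContinuousLinearMap.mul_apply]
    rwa [he1, he2] at h
  have hLapp : ∀ r y, Lb r y = ∑ i, deriv (Z i) r • (A i).mulVec y := by
    intro r y
    rw [hLb]
    simp only [ContinuousLinearMap.coe_sum', Finset.sum_apply,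
      ContinuousLinearMap.coe_smul', Pi.smul_apply]
    refine Finset.sum_congr rfl fun i _ => ?_
    rw [hAb, hq]
    simp [psiE_apply]
  -- ODE uniqueness
  set proj : ℝ → ℝ := fun r => max t (min r T) with hproj
  have hprojIcc : ∀ r, proj r ∈ Set.Icc t T := fun r =>
    ⟨le_max_left _ _, max_le htT (min_le_right _ _)⟩
  have hprojeq : ∀ r ∈ Set.Icc t T, proj r = r := by
    intro r hr
    show max t (min r T) = r
    rw [min_eq_left hr.2, max_eq_right hr.1]
  set v : ℝ → (Fin n → ℝ) → (Fin n → ℝ) := fun r y => Lb (proj r) y with hv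
  have hLnorm : ∀ s, ‖Lb s‖ ≤ ∑ i, |deriv (Z i) s| * ‖Ab i‖ := by
    intro s
    show ‖∑ i, q s i • Ab i‖ ≤ _
    refine le_trans (norm_sum_le _ _) (Finset.sum_le_sum fun i _ => ?_)
    show ‖q s i • Ab i‖ ≤ |deriv (Z i) s| * ‖Ab i‖
    refine le_trans (ContinuousLinearMap.opNorm_smul_le _ _) ?_
    rw [Real.norm_eq_abs]
  have hfc : ContinuousOn (fun s => ∑ i, |deriv (Z i) s| * ‖Ab i‖) (Set.Icc t T) :=
    (continuous_finset_sum _ fun i _ => ((hZdc i).abs.mul continuous_const)).continuousOn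
  obtain ⟨Kb, hKb⟩ := isCompact_Icc.exists_bound_of_continuousOn hfc

  have hKbound : ∀ r, ‖Lb (proj r)‖ ≤ Kb := by
    intro r
    refine le_trans (hLnorm (proj r)) (le_trans (le_abs_self _) ?_)
    have := hKb (proj r) (hprojIcc r)
    rwa [Real.norm_eq_abs] at this
  have hvlip : ∀ r, LipschitzOnWith (Real.toNNReal Kb) (v r) Set.univ := by
    intro r
    have hl : LipschitzWith ‖Lb (proj r)‖₊ (Lb (proj r)) := (Lb (proj r)).lipschitz
    have hle : ‖Lb (proj r)‖₊ ≤ Real.toNNReal Kb := by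
      rw [← NNReal.coe_le_coe, coe_nnnorm, Real.coe_toNNReal']
      exact le_trans (hKbound r) (le_max_left _ _)
    have hlw : LipschitzWith Kb.toNNReal (v r) := by
      rw [hv]
      exact hl.weaken hle
    exact hlw.lipschitzOnWith
  have hXcont : ContinuousOn X (Set.Icc t T) := fun r hr =>
    ((hX r hr).continuousAt).continuousWithinAt
  have hX' : ∀ r ∈ Set.Ico t T, HasDerivWithinAt X (v r (X r)) (Set.Ici r) r := by
    intro r hr
    have hr' : r ∈ Set.Icc t T := Set.Ico_subset_Icc_self hr
    have h := (hX r hr').hasDerivWithinAt (s := Set.Ici r)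
    have he : v r (X r) = ∑ i, deriv (Z i) r • (A i).mulVec (X r) := by
      show Lb (proj r) (X r) = _
      rw [hprojeq r hr', hLapp]
    rwa [he]
  have hYcont : ContinuousOn Y (Set.Icc t T) := fun r _ =>
    ((hYderiv r).continuousAt).continuousWithinAt
  have hY' : ∀ r ∈ Set.Ico t T, HasDerivWithinAt Y (v r (Y r)) (Set.Ici r) r := by
    intro r hr
    have hr' : r ∈ Set.Icc t T := Set.Ico_subset_Icc_self hr
    have h := (hYderiv r).hasDerivWithinAt (s := Set.Ici r)
    have he : v r (Y r) = Lb r (Y r) := by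
      show Lb (proj r) (Y r) = _
      rw [hprojeq r hr']
    rwa [he]
  have hEbt : Eb t = 0 := by
    show (∑ i, a t i • Ab i)
        - ∑ i, ∑ j, (if i < j then c t i j else 0) • (Ab i * Ab j - Ab j * Ab i) = 0
    simp [ha, hc, intervalIntegral.integral_same]
  have hYt : Y t = x := by
    show NormedSpace.exp (Eb t) x = x
    rw [hEbt, NormedSpace.exp_zero, ContinuousLinearMap.one_apply]
  have hinit : X t = Y t := by rw [hXt, hYt]
  have heq : Set.EqOn X Y (Set.Icc t T) :=
    ODE_solution_unique_of_mem_Icc_right (fun r _ => hvlip r) hXcont hX' (fun _ _ => Set.mem_univ _)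
      hYcont hY' (fun _ _ => Set.mem_univ _) hinit
  intro r hr
  rw [heq hr]
  have hpsiEr : psiE n
      (∑ i, (Z i r - Z i t) • A i
        - ∑ i, ∑ j, if i < j then
            ((1 / 2 : ℝ) * (∫ s in t..r, (Z i s - Z i t) * deriv (Z j) s)
              - (1 / 2 : ℝ) * (∫ s in t..r, (Z j s - Z j t) * deriv (Z i) s))
            • (A i * A j - A j * A i)
          else 0) = Eb r := by
    rw [hEb]
    simp only [map_sub, map_sum, map_smul, map_mul, apply_ite (psiE n), map_zero,
      ite_smul, zero_smul, ha, hc, hAb]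
  have hfinal : (NormedSpace.exp
      (∑ i, (Z i r - Z i t) • A i
        - ∑ i, ∑ j, if i < j then
            ((1 / 2 : ℝ) * (∫ s in t..r, (Z i s - Z i t) * deriv (Z j) s)
              - (1 / 2 : ℝ) * (∫ s in t..r, (Z j s - Z j t) * deriv (Z i) s))
            • (A i * A j - A j * A i)
          else 0)).mulVec x = Y r := by
    rw [← psiE_apply n, psiE_exp n, hpsiEr, hY]
  exact hfinal.symm
end
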